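/- arXiv:1105.2845 — 11 statements merged into one kernel-verified Lean document; each statement's English description precedes it below -/
import Mathlib

section
/- For all real numbers α, β and every γ > 0, the integral ∫_α^β dx/(√|x| + γ) is at most 2(√|α| + √|β|). -/
/-- For all real `α, β` and every `γ > 0`,
`∫_α^β dx/(√|x| + γ) ≤ 2(√|α| + √|β|)`. -/
theorem stmt0 (α β γ : ℝ) (hγ : 0 < γ) :
    ∫ x in α..β, 1 / (Real.sqrt |x| + γ) ≤ 2 * (Real.sqrt |α| + Real.sqrt |β|) := by
  set f : ℝ → ℝ := fun x => 1 / (Real.sqrt |x| + γ) with hf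
  have hfc : Continuous f := by
    apply Continuous.div continuous_const
    · exact (Real.continuous_sqrt.comp continuous_abs).add continuous_const
    · intro x
      have := Real.sqrt_nonneg |x|
      positivity
  have hfi : ∀ a b : ℝ, IntervalIntegrable f MeasureTheory.volume a b :=
    fun a b => hfc.intervalIntegrable a b
  have hfnn : ∀ x, 0 ≤ f x := fun x => by
    have := Real.sqrt_nonneg |x|
    rw [hf]; positivity
  -- key lemma : for b ≥ 0, ∫_0^b f ≤ 2 √b
  have key : ∀ b : ℝ, 0 ≤ b → ∫ x in (0:ℝ)..b, f x ≤ 2 * Real.sqrt b := by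
    intro b hb
    set H : ℝ → ℝ := fun x => 2 * Real.sqrt x - ∫ t in (0:ℝ)..x, f t with hH
    have hHc : ContinuousOn H (Set.Icc 0 b) :=
      ((continuous_const.mul Real.continuous_sqrt).sub
        (intervalIntegral.continuous_primitive (fun a b => hfi a b) 0)).continuousOn
    have hderiv : ∀ x ∈ Set.Ioo (0:ℝ) b, HasDerivAt H (1 / Real.sqrt x - f x) x := by
      intro x hx
      have hx0 : 0 < x := hx.1
      have h1 : HasDerivAt (fun x => 2 * Real.sqrt x) (1 / Real.sqrt x) x := by
        have h := (Real.hasDerivAt_sqrt hx0.ne').const_mul 2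
        refine h.congr_deriv ?_
        have hs : Real.sqrt x ≠ 0 := (Real.sqrt_pos.2 hx0).ne'
        field_simp
      have h2 : HasDerivAt (fun x => ∫ t in (0:ℝ)..x, f t) (f x) x :=
        intervalIntegral.integral_hasDerivAt_right (hfi 0 x)
          (hfc.stronglyMeasurableAtFilter _ _) hfc.continuousAt
      exact h1.sub h2
    have hmono : MonotoneOn H (Set.Icc 0 b) := by
      apply monotoneOn_of_deriv_nonneg (convex_Icc 0 b) hHc
      · intro x hx
        rw [interior_Icc] at hx
        exact (hderiv x hx).differentiableAt.differentiableWithinAt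
      · intro x hx
        rw [interior_Icc] at hx
        rw [(hderiv x hx).deriv]
        have hx0 : 0 < x := hx.1
        have hsx : 0 < Real.sqrt x := Real.sqrt_pos.2 hx0
        have hle : f x ≤ 1 / Real.sqrt x := by
          rw [hf]
          apply one_div_le_one_div_of_le hsx
          rw [abs_of_pos hx0]
          linarith
        linarith
    have h0 : H 0 = 0 := by simp [hH]
    have hb' : b ∈ Set.Icc (0:ℝ) b := Set.right_mem_Icc.2 hb
    have h0' : (0:ℝ) ∈ Set.Icc (0:ℝ) b := Set.left_mem_Icc.2 hb
    have := hmono h0' hb' hb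
    rw [h0] at this
    have : 0 ≤ 2 * Real.sqrt b - ∫ t in (0:ℝ)..b, f t := this
    linarith
  -- negative side : for a ≤ 0, ∫_a^0 f ≤ 2 √|a|
  have keyneg : ∀ a : ℝ, a ≤ 0 → ∫ x in a..(0:ℝ), f x ≤ 2 * Real.sqrt |a| := by
    intro a ha
    have hcomp : ∫ x in a..(0:ℝ), f x = ∫ x in (0:ℝ)..(-a), f x := by
      have h := intervalIntegral.integral_comp_neg f (a := 0) (b := -a)
      simp only [neg_neg, neg_zero] at h
      rw [← h]
      apply intervalIntegral.integral_congr
      intro x _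
      simp [hf, abs_neg]
    rw [hcomp]
    have := key (-a) (by linarith)
    rwa [abs_of_nonpos ha]
  have h1 : ∫ x in α..(0:ℝ), f x ≤ 2 * Real.sqrt |α| := by
    rcases le_or_gt α 0 with h | h
    · exact keyneg α h
    · have : ∫ x in α..(0:ℝ), f x = -∫ x in (0:ℝ)..α, f x :=
        intervalIntegral.integral_symm 0 α
      rw [this]
      have hnn : 0 ≤ ∫ x in (0:ℝ)..α, f x :=
        intervalIntegral.integral_nonneg h.le (fun x _ => hfnn x)
      have : 0 ≤ 2 * Real.sqrt |α| := by positivity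
      linarith
  have h2 : ∫ x in (0:ℝ)..β, f x ≤ 2 * Real.sqrt |β| := by
    rcases le_or_gt 0 β with h | h
    · have := key β h
      rwa [abs_of_nonneg h]
    · have heq : ∫ x in (0:ℝ)..β, f x = -∫ x in β..(0:ℝ), f x :=
        intervalIntegral.integral_symm β 0
      rw [heq]
      have hnn : 0 ≤ ∫ x in β..(0:ℝ), f x :=
        intervalIntegral.integral_nonneg h.le (fun x _ => hfnn x)
      have : 0 ≤ 2 * Real.sqrt |β| := by positivity
      linarith
  have hsplit : (∫ x in α..(0:ℝ), f x) + ∫ x in (0:ℝ)..β, f x = ∫ x in α..β, f x :=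
    intervalIntegral.integral_add_adjacent_intervals (hfi α 0) (hfi 0 β)
  calc ∫ x in α..β, f x = (∫ x in α..(0:ℝ), f x) + ∫ x in (0:ℝ)..β, f x := hsplit.symm
    _ ≤ 2 * Real.sqrt |α| + 2 * Real.sqrt |β| := add_le_add h1 h2
    _ = 2 * (Real.sqrt |α| + Real.sqrt |β|) := by ring
end

section
/- Let γ, λ > 0 and let u : ℝ → ℝ be differentiable with u'(t) = λ(√|u(t)| + γ) for all t ≥ t₀. Then for all t ≥ t₀, t - t₀ ≤ (2/λ)(√|u(t)| + √|u(t₀)|). -/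
private lemma aux_pos (γ lam a b : ℝ) (hγ : 0 < γ) (hlam : 0 < lam) (u : ℝ → ℝ)
    (hab : a ≤ b)
    (hu : ∀ s ∈ Set.Icc a b, HasDerivAt u (lam * (Real.sqrt (u s) + γ)) s)
    (hpos : ∀ s ∈ Set.Ioo a b, 0 < u s) :
    b - a ≤ (2 / lam) * Real.sqrt (u b) := by
  set f : ℝ → ℝ := fun s => 2 / lam * Real.sqrt (u s) - s with hf
  have hcu : ContinuousOn u (Set.Icc a b) := fun s hs =>
    (hu s hs).continuousAt.continuousWithinAt
  have hcont : ContinuousOn f (Set.Icc a b) :=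
    (continuousOn_const.mul hcu.sqrt).sub continuousOn_id
  have hmf : StrictMonoOn f (Set.Icc a b) := by
    apply strictMonoOn_of_deriv_pos (convex_Icc a b) hcont
    intro x hx
    rw [interior_Icc] at hx
    have hux : 0 < u x := hpos x hx
    have hsx : 0 < Real.sqrt (u x) := Real.sqrt_pos.2 hux
    have hd : HasDerivAt (fun s => Real.sqrt (u s))
        (lam * (Real.sqrt (u x) + γ) / (2 * Real.sqrt (u x))) x :=
      (hu x (Set.Ioo_subset_Icc_self hx)).sqrt hux.ne'
    have hdf : HasDerivAt f
        (2 / lam * (lam * (Real.sqrt (u x) + γ) / (2 * Real.sqrt (u x))) - 1) x :=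
      (hd.const_mul (2 / lam)).sub (hasDerivAt_id x)
    rw [hdf.deriv]
    have heq : 2 / lam * (lam * (Real.sqrt (u x) + γ) / (2 * Real.sqrt (u x))) - 1
        = γ / Real.sqrt (u x) := by
      field_simp
      ring
    rw [heq]
    positivity
  rcases eq_or_lt_of_le hab with rfl | hlt
  · have : 0 ≤ 2 / lam * Real.sqrt (u a) := by positivity
    linarith
  · have hfle : f a < f b := hmf ⟨le_rfl, hab⟩ ⟨hab, le_rfl⟩ hlt
    have hsa : 0 ≤ Real.sqrt (u a) := Real.sqrt_nonneg _
    have h2 : 0 ≤ 2 / lam := by positivity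
    have := mul_nonneg h2 hsa
    simp only [hf] at hfle
    linarith

private lemma aux_neg (γ lam a b : ℝ) (hγ : 0 < γ) (hlam : 0 < lam) (u : ℝ → ℝ)
    (hab : a ≤ b)
    (hu : ∀ s ∈ Set.Icc a b, HasDerivAt u (lam * (Real.sqrt (-u s) + γ)) s)
    (hneg : ∀ s ∈ Set.Ioo a b, u s < 0) :
    b - a ≤ (2 / lam) * Real.sqrt (-u a) := by
  set g : ℝ → ℝ := fun s => 2 / lam * Real.sqrt (-u s) + s with hg
  have hcu : ContinuousOn u (Set.Icc a b) := fun s hs =>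
    (hu s hs).continuousAt.continuousWithinAt
  have hcont : ContinuousOn g (Set.Icc a b) :=
    (continuousOn_const.mul hcu.neg.sqrt).add continuousOn_id
  have hag : StrictAntiOn g (Set.Icc a b) := by
    apply strictAntiOn_of_deriv_neg (convex_Icc a b) hcont
    intro x hx
    rw [interior_Icc] at hx
    have hux : 0 < -u x := by linarith [hneg x hx]
    have hsx : 0 < Real.sqrt (-u x) := Real.sqrt_pos.2 hux
    have hd : HasDerivAt (fun s => Real.sqrt (-u s))
        ((-(lam * (Real.sqrt (-u x) + γ))) / (2 * Real.sqrt (-u x))) x :=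
      ((hu x (Set.Ioo_subset_Icc_self hx)).neg).sqrt hux.ne'
    have hdg : HasDerivAt g
        (2 / lam * ((-(lam * (Real.sqrt (-u x) + γ))) / (2 * Real.sqrt (-u x))) + 1) x :=
      (hd.const_mul (2 / lam)).add (hasDerivAt_id x)
    rw [hdg.deriv]
    have heq : 2 / lam * ((-(lam * (Real.sqrt (-u x) + γ))) / (2 * Real.sqrt (-u x))) + 1
        = -(γ / Real.sqrt (-u x)) := by
      field_simp
      ring
    rw [heq]
    have : 0 < γ / Real.sqrt (-u x) := by positivity
    linarith
  rcases eq_or_lt_of_le hab with rfl | hlt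
  · have : 0 ≤ 2 / lam * Real.sqrt (-u a) := by positivity
    linarith
  · have hfle : g b < g a := hag ⟨le_rfl, hab⟩ ⟨hab, le_rfl⟩ hlt
    have hsb : 0 ≤ Real.sqrt (-u b) := Real.sqrt_nonneg _
    have h2 : 0 ≤ 2 / lam := by positivity
    have := mul_nonneg h2 hsb
    simp only [hg] at hfle
    linarith

/-- If `γ, λ > 0` and `u : ℝ → ℝ` is differentiable with
`u'(t) = λ(√|u(t)| + γ)` for all `t ≥ t₀`, then for all `t ≥ t₀`,
`t - t₀ ≤ (2/λ)(√|u(t)| + √|u(t₀)|)`. -/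
theorem stmt1 (γ lam t₀ : ℝ) (hγ : 0 < γ) (hlam : 0 < lam) (u : ℝ → ℝ)
    (hu : ∀ t, t₀ ≤ t → HasDerivAt u (lam * (Real.sqrt |u t| + γ)) t) :
    ∀ t, t₀ ≤ t → t - t₀ ≤ (2 / lam) * (Real.sqrt |u t| + Real.sqrt |u t₀|) := by
  intro t ht
  have hcu : ContinuousOn u (Set.Ici t₀) := fun s hs =>
    (hu s hs).continuousAt.continuousWithinAt
  have hmono : StrictMonoOn u (Set.Ici t₀) := by
    apply strictMonoOn_of_deriv_pos (convex_Ici t₀) hcu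
    intro x hx
    rw [interior_Ici] at hx
    rw [(hu x hx.le).deriv]
    have : 0 ≤ Real.sqrt |u x| := Real.sqrt_nonneg _
    positivity
  have h2 : 0 ≤ 2 / lam := by positivity
  by_cases h0 : 0 ≤ u t₀
  · -- u nonneg on [t₀, t]
    have hnn : ∀ s ∈ Set.Icc t₀ t, 0 ≤ u s := fun s hs =>
      h0.trans (hmono.monotoneOn Set.self_mem_Ici hs.1 hs.1)
    have hpos : ∀ s ∈ Set.Ioo t₀ t, 0 < u s := fun s hs =>
      lt_of_le_of_lt h0 (hmono Set.self_mem_Ici hs.1.le hs.1)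
    have key := aux_pos γ lam t₀ t hγ hlam u ht
      (fun s hs => by
        have := hu s hs.1
        rwa [abs_of_nonneg (hnn s hs)] at this) hpos
    have hut : |u t| = u t := abs_of_nonneg (hnn t ⟨ht, le_rfl⟩)
    rw [hut]
    have := mul_nonneg h2 (Real.sqrt_nonneg |u t₀|)
    nlinarith [Real.sqrt_nonneg |u t₀|]
  · push_neg at h0
    by_cases h1 : u t ≤ 0
    · -- u nonpos on [t₀, t]
      have hnp : ∀ s ∈ Set.Icc t₀ t, u s ≤ 0 := fun s hs =>
        (hmono.monotoneOn hs.1 (by exact ht : t ∈ Set.Ici t₀) hs.2).trans h1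
      have hneg : ∀ s ∈ Set.Ioo t₀ t, u s < 0 := fun s hs =>
        lt_of_lt_of_le (hmono hs.1.le (by exact ht : t ∈ Set.Ici t₀) hs.2) h1
      have key := aux_neg γ lam t₀ t hγ hlam u ht
        (fun s hs => by
          have := hu s hs.1
          rwa [abs_of_nonpos (hnp s hs)] at this) hneg
      have hut : |u t₀| = -u t₀ := abs_of_nonpos h0.le
      rw [hut]
      have := mul_nonneg h2 (Real.sqrt_nonneg |u t|)
      nlinarith [Real.sqrt_nonneg |u t|]
    · push_neg at h1
      obtain ⟨c, hc, hc0⟩ : ∃ c ∈ Set.Icc t₀ t, u c = 0 :=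
        intermediate_value_Icc ht (hcu.mono Set.Icc_subset_Ici_self) ⟨h0.le, h1.le⟩
      -- left part: u ≤ 0 on [t₀, c]
      have hnp : ∀ s ∈ Set.Icc t₀ c, u s ≤ 0 := fun s hs => by
        have := hmono.monotoneOn hs.1 (Set.mem_Ici.2 hc.1) hs.2
        linarith [hc0 ▸ this]
      have hnegl : ∀ s ∈ Set.Ioo t₀ c, u s < 0 := fun s hs => by
        have := hmono hs.1.le (Set.mem_Ici.2 hc.1) hs.2
        rw [hc0] at this
        exact this
      have key1 := aux_neg γ lam t₀ c hγ hlam u hc.1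
        (fun s hs => by
          have := hu s hs.1
          rwa [abs_of_nonpos (hnp s hs)] at this) hnegl
      -- right part: u ≥ 0 on [c, t]
      have hcIci : c ∈ Set.Ici t₀ := Set.mem_Ici.2 hc.1
      have hnn : ∀ s ∈ Set.Icc c t, 0 ≤ u s := fun s hs => by
        have := hmono.monotoneOn hcIci (Set.mem_Ici.2 (hc.1.trans hs.1)) hs.1
        rw [hc0] at this
        exact this
      have hposr : ∀ s ∈ Set.Ioo c t, 0 < u s := fun s hs => by
        have := hmono hcIci (Set.mem_Ici.2 (hc.1.trans hs.1.le)) hs.1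
        rw [hc0] at this
        exact this
      have key2 := aux_pos γ lam c t hγ hlam u hc.2
        (fun s hs => by
          have := hu s (hc.1.trans hs.1)
          rwa [abs_of_nonneg (hnn s hs)] at this) hposr
      have hut : |u t| = u t := abs_of_nonneg (hnn t ⟨hc.2, le_rfl⟩)
      have hut0 : |u t₀| = -u t₀ := abs_of_nonpos h0.le
      rw [hut, hut0]
      nlinarith [key1, key2]
end

section
/- Let γ, λ > 0, t₀ ∈ ℝ, and suppose for each j ∈ ℕ, u_j : ℝ → ℝ is differentiable with u_j'(t) = λ(√|u_j(t)| + γ_j) for all t, where γ_j > 0. If for some t > t₀ the sequence (u_j(t))_j and (u_j(t₀))_j both tend to 0 as j → ∞, then we reach a contradiction; i.e., no such family of solutions exists with λ(t - t₀)/2 > 0 and √|u_j(t)| + √|u_j(t₀)| → 0. -/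
open Filter Topology

lemma dieudonne_key (lam g : ℝ) (hlam : 0 < lam) (hg : 0 < g) (u : ℝ → ℝ)
    (hu : ∀ s, HasDerivAt u (lam * (Real.sqrt |u s| + g)) s)
    (a b : ℝ) (hab : a ≤ b) (ha : 0 < u a) :
    lam / 2 * (b - a) ≤ Real.sqrt (u b) := by
  have hmono : StrictMono u := by
    apply strictMono_of_deriv_pos
    intro x
    rw [(hu x).deriv]
    positivity
  have hpos : ∀ s ∈ Set.Icc a b, 0 < u s := fun s hs =>
    lt_of_lt_of_le ha (hmono.monotone hs.1)
  set f : ℝ → ℝ := fun s => Real.sqrt (u s) with hf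
  have hder : ∀ s ∈ Set.Icc a b,
      HasDerivAt f (1 / (2 * Real.sqrt (u s)) * (lam * (Real.sqrt |u s| + g))) s := by
    intro s hs
    exact (Real.hasDerivAt_sqrt (ne_of_gt (hpos s hs))).comp s (hu s)
  have hdiff : DifferentiableOn ℝ f (interior (Set.Icc a b)) := fun s hs =>
    ((hder s (interior_subset hs)).differentiableAt).differentiableWithinAt
  have hcont : ContinuousOn f (Set.Icc a b) := fun s hs =>
    ((hder s hs).differentiableAt).continuousAt.continuousWithinAt
  have hge : ∀ s ∈ interior (Set.Icc a b), lam / 2 ≤ deriv f s := by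
    intro s hs
    have hs' := interior_subset hs
    rw [(hder s hs').deriv]
    have hus := hpos s hs'
    have hsq : 0 < Real.sqrt (u s) := Real.sqrt_pos.mpr hus
    rw [abs_of_pos hus]
    calc lam / 2 = 1 / (2 * Real.sqrt (u s)) * (lam * Real.sqrt (u s)) := by
          field_simp
      _ ≤ 1 / (2 * Real.sqrt (u s)) * (lam * (Real.sqrt (u s) + g)) :=
          mul_le_mul_of_nonneg_left (by nlinarith) (by positivity)
  have := (convex_Icc a b).mul_sub_le_image_sub_of_le_deriv hcont hdiff hge a
    (Set.left_mem_Icc.mpr hab) b (Set.right_mem_Icc.mpr hab) hab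
  have hfa : 0 ≤ f a := Real.sqrt_nonneg _
  simp only [hf] at this ⊢
  linarith

lemma dieudonne_bound (lam g t₀ t : ℝ) (hlam : 0 < lam) (hg : 0 < g) (ht : t₀ < t)
    (u : ℝ → ℝ) (hu : ∀ s, HasDerivAt u (lam * (Real.sqrt |u s| + g)) s) :
    lam / 2 * ((t - t₀) / 4) ≤ Real.sqrt |u t| + Real.sqrt |u t₀| := by
  have hmono : StrictMono u := by
    apply strictMono_of_deriv_pos
    intro x
    rw [(hu x).deriv]
    positivity
  have h1nn : 0 ≤ Real.sqrt |u t| := Real.sqrt_nonneg _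
  have h2nn : 0 ≤ Real.sqrt |u t₀| := Real.sqrt_nonneg _
  set m : ℝ := (t₀ + t) / 2 with hm
  set m' : ℝ := (t₀ + m) / 2 with hm'
  by_cases h0 : 0 < u t₀
  · have := dieudonne_key lam g hlam hg u hu t₀ t ht.le h0
    have habs : Real.sqrt (u t) ≤ Real.sqrt |u t| := by
      rw [abs_of_pos (lt_of_lt_of_le h0 (hmono.monotone ht.le))]
    nlinarith
  · by_cases hM : 0 < u m
    · have := dieudonne_key lam g hlam hg u hu m t (by rw [hm]; linarith) hM
      have habs : Real.sqrt (u t) ≤ Real.sqrt |u t| := by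
        rw [abs_of_pos (lt_of_lt_of_le hM (hmono.monotone (by rw [hm]; linarith)))]
      have : lam / 2 * (t - m) ≤ Real.sqrt |u t| := by linarith
      have hm2 : t - m = (t - t₀) / 2 := by rw [hm]; ring
      nlinarith
    · -- u m ≤ 0, so u m' < 0; reflect
      push_neg at h0 hM
      set v : ℝ → ℝ := fun s => -u (-s) with hv
      have hvd : ∀ s, HasDerivAt v (lam * (Real.sqrt |v s| + g)) s := by
        intro s
        have h1 : HasDerivAt (fun s : ℝ => u (-s))
            (lam * (Real.sqrt |u (-s)| + g) * (-1)) s :=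
          (hu (-s)).comp s (hasDerivAt_neg s)
        have h2 := h1.neg
        simp only [hv, neg_neg, abs_neg] at h2 ⊢
        refine h2.congr_deriv ?_
        ring
      have hva : 0 < v (-m') := by
        simp only [hv, neg_neg]
        have : u m' < u m := hmono (by rw [hm', hm]; linarith)
        linarith
      have hle : (-m' : ℝ) ≤ -t₀ := by rw [hm', hm]; linarith
      have := dieudonne_key lam g hlam hg v hvd (-m') (-t₀) hle hva
      have hveq : v (-t₀) = -u t₀ := by simp [hv]
      have habs : Real.sqrt (v (-t₀)) ≤ Real.sqrt |u t₀| := by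
        rw [hveq, ← abs_neg]
        exact Real.sqrt_le_sqrt (le_abs_self _)
      have hm3 : (-t₀) - (-m') = (t - t₀) / 4 := by rw [hm', hm]; ring
      rw [hm3] at this
      linarith

/-- Dieudonné's argument: there is no family of solutions `u_j` of
`u_j' = λ(√|u_j| + γ_j)` with `λ, γ_j > 0` whose values at some `t > t₀`
and at `t₀` both tend to `0` as `j → ∞`. -/
theorem stmt2 (lam t₀ t : ℝ) (hlam : 0 < lam) (ht : t₀ < t)
    (γ : ℕ → ℝ) (hγ : ∀ j, 0 < γ j) (u : ℕ → ℝ → ℝ)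
    (hu : ∀ j s, HasDerivAt (u j) (lam * (Real.sqrt |u j s| + γ j)) s)
    (h1 : Tendsto (fun j => u j t) atTop (𝓝 0))
    (h2 : Tendsto (fun j => u j t₀) atTop (𝓝 0)) : False := by
  have hbound : ∀ j, lam / 2 * ((t - t₀) / 4) ≤
      Real.sqrt |u j t| + Real.sqrt |u j t₀| := fun j =>
    dieudonne_bound lam (γ j) t₀ t hlam (hγ j) ht (u j) (hu j)
  have hcont : Continuous (fun x : ℝ => Real.sqrt |x|) :=
    Real.continuous_sqrt.comp continuous_abs
  have ht1 : Tendsto (fun j => Real.sqrt |u j t|) atTop (𝓝 0) := by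
    have := (hcont.tendsto 0).comp h1
    simpa [Function.comp_def] using this
  have ht2 : Tendsto (fun j => Real.sqrt |u j t₀|) atTop (𝓝 0) := by
    have := (hcont.tendsto 0).comp h2
    simpa [Function.comp_def] using this
  have hsum : Tendsto (fun j => Real.sqrt |u j t| + Real.sqrt |u j t₀|) atTop (𝓝 0) := by
    simpa using ht1.add ht2
  have hle : lam / 2 * ((t - t₀) / 4) ≤ 0 :=
    le_of_tendsto_of_tendsto tendsto_const_nhds hsum (Eventually.of_forall hbound)
  have : 0 < lam / 2 * ((t - t₀) / 4) := by
    apply mul_pos (by linarith) (by linarith)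
  linarith
end

section
/- The vector field f : c₀ → c₀ defined coordinatewise by f(x)_n = √|x_n| + 1/(n+1) is well defined (maps c₀ into c₀) and continuous. -/
open Filter Topology

lemma my_sqrt_add_le (x y : ℝ) (hx : 0 ≤ x) (hy : 0 ≤ y) :
    Real.sqrt (x + y) ≤ Real.sqrt x + Real.sqrt y := by
  rw [show Real.sqrt x + Real.sqrt y = Real.sqrt ((Real.sqrt x + Real.sqrt y) ^ 2) from
    (Real.sqrt_sq (by positivity)).symm]
  apply Real.sqrt_le_sqrt
  nlinarith [Real.sq_sqrt hx, Real.sq_sqrt hy, Real.sqrt_nonneg x, Real.sqrt_nonneg y,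
    mul_nonneg (Real.sqrt_nonneg x) (Real.sqrt_nonneg y)]

lemma my_abs_sqrt_sub_sqrt (s t : ℝ) (hs : 0 ≤ s) (ht : 0 ≤ t) :
    |Real.sqrt s - Real.sqrt t| ≤ Real.sqrt |s - t| := by
  rw [abs_sub_le_iff]
  constructor
  · have h1 : Real.sqrt s ≤ Real.sqrt (t + |s - t|) :=
      Real.sqrt_le_sqrt (by cases abs_cases (s - t) with
        | inl h => linarith [h.1]
        | inr h => linarith [h.1, abs_nonneg (s - t)])
    calc Real.sqrt s - Real.sqrt t ≤ Real.sqrt (t + |s - t|) - Real.sqrt t := by linarith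
      _ ≤ Real.sqrt t + Real.sqrt |s - t| - Real.sqrt t :=
          by linarith [my_sqrt_add_le t |s - t| ht (abs_nonneg _)]
      _ = Real.sqrt |s - t| := by ring
  · have h1 : Real.sqrt t ≤ Real.sqrt (s + |s - t|) :=
      Real.sqrt_le_sqrt (by cases abs_cases (s - t) with
        | inl h => linarith [h.1, abs_nonneg (s - t)]
        | inr h => linarith [h.1])
    calc Real.sqrt t - Real.sqrt s ≤ Real.sqrt (s + |s - t|) - Real.sqrt s := by linarith
      _ ≤ Real.sqrt s + Real.sqrt |s - t| - Real.sqrt s :=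
          by linarith [my_sqrt_add_le s |s - t| hs (abs_nonneg _)]
      _ = Real.sqrt |s - t| := by ring

noncomputable def myF (x : ZeroAtInftyContinuousMap ℕ ℝ) : ZeroAtInftyContinuousMap ℕ ℝ where
  toFun n := Real.sqrt |x n| + 1 / ((n : ℝ) + 1)
  continuous_toFun := continuous_of_discreteTopology
  zero_at_infty' := by
    rw [cocompact_eq_atTop (α := ℕ)]
    have hx := x.zero_at_infty'
    rw [cocompact_eq_atTop (α := ℕ)] at hx
    have hc : Filter.Tendsto (fun t : ℝ => Real.sqrt |t|) (𝓝 0) (𝓝 0) := by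
      simpa [Function.comp_def] using (Real.continuous_sqrt.comp continuous_abs).tendsto 0
    have h1 : Filter.Tendsto (fun n : ℕ => Real.sqrt |x n|) atTop (𝓝 0) := hc.comp hx
    simpa using h1.add tendsto_one_div_add_atTop_nhds_zero_nat

lemma myF_dist (x y : ZeroAtInftyContinuousMap ℕ ℝ) :
    dist (myF x) (myF y) ≤ Real.sqrt (dist x y) := by
  rw [← ZeroAtInftyContinuousMap.dist_toBCF_eq_dist]
  refine (BoundedContinuousFunction.dist_le (Real.sqrt_nonneg _)).mpr fun n => ?_
  have h0 : dist ((myF x).toBCF n) ((myF y).toBCF n) = abs (Real.sqrt (abs (x n)) - Real.sqrt (abs (y n))) := by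
    simp only [Real.dist_eq]
    show |(Real.sqrt |x n| + 1 / ((n : ℝ) + 1)) - (Real.sqrt |y n| + 1 / ((n : ℝ) + 1))| = _
    ring_nf
  rw [h0]
  calc abs (Real.sqrt (abs (x n)) - Real.sqrt (abs (y n)))
      ≤ Real.sqrt (abs (abs (x n) - abs (y n))) :=
        my_abs_sqrt_sub_sqrt _ _ (abs_nonneg _) (abs_nonneg _)
    _ ≤ Real.sqrt |x n - y n| := Real.sqrt_le_sqrt (abs_abs_sub_abs_le_abs_sub _ _)
    _ ≤ Real.sqrt (dist x y) := Real.sqrt_le_sqrt (by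
        have h := BoundedContinuousFunction.dist_coe_le_dist (f := x.toBCF) (g := y.toBCF) n
        rw [ZeroAtInftyContinuousMap.dist_toBCF_eq_dist] at h
        simpa [Real.dist_eq] using h)

/-- The vector field `f : c₀ → c₀` given coordinatewise by
`f(x)_n = √|x_n| + 1/(n+1)` is well defined (maps `c₀` into `c₀`)
and continuous. Here `c₀` is modeled as `C₀(ℕ, ℝ)` with the sup norm. -/
theorem stmt3 : ∃ F : ZeroAtInftyContinuousMap ℕ ℝ → ZeroAtInftyContinuousMap ℕ ℝ,
    Continuous F ∧ ∀ (x : ZeroAtInftyContinuousMap ℕ ℝ) (n : ℕ),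
      F x n = Real.sqrt |x n| + 1 / ((n : ℝ) + 1) := by
  refine ⟨myF, ?_, fun x n => rfl⟩
  rw [Metric.continuous_iff]
  intro b ε hε
  refine ⟨ε ^ 2, by positivity, fun a ha => ?_⟩
  calc dist (myF a) (myF b) ≤ Real.sqrt (dist a b) := myF_dist a b
    _ < Real.sqrt (ε ^ 2) := Real.sqrt_lt_sqrt dist_nonneg ha
    _ = ε := by rw [Real.sqrt_sq hε.le]
end

section
/- For the field f : c₀ → c₀ given by f(x)_n = √|x_n| + 1/(n+1), the autonomous ODE u'(t) = f(u(t)) has no local solution u : I → c₀ on any nonempty open interval I ⊆ ℝ. -/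
open Set Filter Topology

lemma hasDerivAt_mul_abs (x : ℝ) : HasDerivAt (fun y : ℝ => y * |y|) (2 * |x|) x := by
  rcases lt_trichotomy x 0 with hx | hx | hx
  · have h : HasDerivAt (fun y : ℝ => -(y * y)) (2 * |x|) x := by
      have := ((hasDerivAt_id x).mul (hasDerivAt_id x)).neg
      simpa [abs_of_neg hx, id, Pi.mul_def, Pi.neg_def] using this.congr_deriv (by simp [id]; ring)
    apply h.congr_of_eventuallyEq
    filter_upwards [eventually_lt_nhds hx] with y hy
    simp [abs_of_neg hy]
  · subst hx
    rw [hasDerivAt_iff_tendsto_slope]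
    have h : ∀ y : ℝ, y ≠ 0 → slope (fun y : ℝ => y * |y|) 0 y = |y| := by
      intro y hy
      rw [slope_def_field]; field_simp; simp [mul_comm]
    rw [tendsto_congr' (by filter_upwards [self_mem_nhdsWithin] with y hy using h y hy)]
    simpa using (continuous_abs.tendsto (0:ℝ)).mono_left nhdsWithin_le_nhds
  · have h : HasDerivAt (fun y : ℝ => y * y) (2 * |x|) x := by
      have := (hasDerivAt_id x).mul (hasDerivAt_id x)
      simpa [abs_of_pos hx, id, Pi.mul_def] using this.congr_deriv (by simp [id]; ring)
    apply h.congr_of_eventuallyEq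
    filter_upwards [eventually_gt_nhds hx] with y hy
    simp [abs_of_pos hy]

lemma vfun_hasDerivAt (c r : ℝ) :
    HasDerivAt (fun r => (r - c) * |r - c| / 4)
      (Real.sqrt |(r - c) * |r - c| / 4|) r := by
  have h1 := hasDerivAt_mul_abs (r - c)
  have h2 : HasDerivAt (fun r : ℝ => r - c) 1 r := (hasDerivAt_id r).sub_const c
  have h4 := (h1.comp r h2).div_const 4
  convert h4 using 1
  · rfl
  · rfl
  · rfl
  rw [abs_div, abs_mul, abs_abs]
  rw [show |(4:ℝ)| = 4 by norm_num]
  rw [show |r - c| * |r - c| / 4 = (|r - c| / 2) ^ 2 by ring,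
    Real.sqrt_sq (by positivity)]
  ring

noncomputable def evalCLM (n : ℕ) : ZeroAtInftyContinuousMap ℕ ℝ →L[ℝ] ℝ :=
  LinearMap.mkContinuous
    { toFun := fun x => x n
      map_add' := fun x y => by simp
      map_smul' := fun c x => by simp }
    1 (fun x => by
      simp only [LinearMap.coe_mk, AddHom.coe_mk, one_mul]
      calc ‖x n‖ = ‖x.toBCF n‖ := rfl
        _ ≤ ‖x.toBCF‖ := x.toBCF.norm_coe_le_norm n
        _ = ‖x‖ := ZeroAtInftyContinuousMap.norm_toBCF_eq_norm)

lemma tendsto_apply_atTop (x : ZeroAtInftyContinuousMap ℕ ℝ) :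
    Tendsto (fun n => x n) atTop (𝓝 0) := by
  have := x.zero_at_infty'
  rwa [cocompact_eq_cofinite, Nat.cofinite_eq_atTop] at this

lemma barrier {g v : ℝ → ℝ} {s t δ : ℝ} (hδ : 0 < δ)
    (hg : ∀ r ∈ Set.Icc s t, HasDerivAt g (Real.sqrt |g r| + δ) r)
    (hv : ∀ r ∈ Set.Icc s t, HasDerivAt v (Real.sqrt |v r|) r)
    (h0 : v s < g s) : ∀ r ∈ Set.Icc s t, v r < g r := by
  by_contra hcon
  push_neg at hcon
  obtain ⟨r1, hr1, hr1'⟩ := hcon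
  set w := fun r => g r - v r with hw
  have hwd : ∀ r ∈ Set.Icc s t, HasDerivAt w (Real.sqrt |g r| + δ - Real.sqrt |v r|) r :=
    fun r hr => (hg r hr).sub (hv r hr)
  have hwc : ContinuousOn w (Set.Icc s t) :=
    fun r hr => ((hwd r hr).continuousAt).continuousWithinAt
  set A := Set.Icc s t ∩ w ⁻¹' Set.Iic 0 with hA
  have hA_ne : A.Nonempty := ⟨r1, hr1, by simp [w]; linarith⟩
  have hA_bdd : BddBelow A := ⟨s, fun r hr => hr.1.1⟩
  have hA_closed : IsClosed A :=
    hwc.preimage_isClosed_of_isClosed isClosed_Icc isClosed_Iic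
  set r0 := sInf A with hr0
  have hr0A : r0 ∈ A := hA_closed.csInf_mem hA_ne hA_bdd
  have hr0mem : r0 ∈ Set.Icc s t := hr0A.1
  have hw0 : w r0 ≤ 0 := hr0A.2
  have hpos : ∀ r, s ≤ r → r < r0 → 0 < w r := by
    intro r hr hrlt
    by_contra hc
    push_neg at hc
    exact absurd (csInf_le hA_bdd ⟨⟨hr, hrlt.le.trans hr0mem.2⟩, hc⟩) (not_le.mpr hrlt)
  have hr0s : s < r0 := by
    rcases lt_or_eq_of_le hr0mem.1 with h | h
    · exact h
    · exfalso; rw [← h] at hw0; simp [w] at hw0; linarith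
  have hw0' : w r0 = 0 := by
    refine le_antisymm hw0 ?_
    have htend : Tendsto w (𝓝[<] r0) (𝓝 (w r0)) :=
      ((hwd r0 hr0mem).continuousAt).continuousWithinAt.tendsto
    refine ge_of_tendsto htend ?_
    filter_upwards [Ico_mem_nhdsLT_of_mem (⟨hr0s, le_refl r0⟩ : r0 ∈ Set.Ioc s r0)] with r hr
    exact (hpos r hr.1 hr.2).le
  have hgv : g r0 = v r0 := by simp [w] at hw0'; linarith
  have hd : HasDerivAt w δ r0 := by
    have := hwd r0 hr0mem
    rwa [hgv, add_sub_cancel_left] at this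
  rw [hasDerivAt_iff_tendsto_slope] at hd
  have hev : ∀ᶠ r in 𝓝[<] r0, 0 < slope w r0 r := by
    have : ∀ᶠ y in 𝓝 δ, 0 < y := eventually_gt_nhds hδ
    exact (hd.mono_left (nhdsWithin_mono _ fun x hx => ne_of_lt hx)).eventually this
  have hev2 : Set.Ico s r0 ∈ 𝓝[<] r0 := Ico_mem_nhdsLT_of_mem ⟨hr0s, le_refl r0⟩
  obtain ⟨r, hr1s, hr2s⟩ := (hev.and (eventually_of_mem hev2 fun x hx => hx)).exists
  have hlt : r < r0 := hr2s.2
  have : w r < 0 := by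
    have hslope : slope w r0 r = (w r - w r0) / (r - r0) := by
      rw [slope_def_field]
    rw [hslope, hw0', sub_zero] at hr1s
    by_contra hc
    push_neg at hc
    have : w r / (r - r0) ≤ 0 := div_nonpos_of_nonneg_of_nonpos hc (by linarith)
    linarith
  linarith [hpos r hr2s.1 hlt]

/-- Dieudonné's counterexample: for the field `f : c₀ → c₀` with
`f(x)_n = √|x_n| + 1/(n+1)`, the ODE `u' = f(u)` has no local solution on any
nonempty open interval. -/
theorem stmt5 (F : ZeroAtInftyContinuousMap ℕ ℝ → ZeroAtInftyContinuousMap ℕ ℝ)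
    (hF : ∀ (x : ZeroAtInftyContinuousMap ℕ ℝ) (n : ℕ),
      F x n = Real.sqrt |x n| + 1 / ((n : ℝ) + 1)) :
    ¬ ∃ (a b : ℝ) (_ : a < b) (u : ℝ → ZeroAtInftyContinuousMap ℕ ℝ),
      ∀ t ∈ Set.Ioo a b, HasDerivAt u (F (u t)) t := by
  rintro ⟨a, b, hab, u, hu⟩
  set t0 := a + (b - a) / 3 with ht0
  set t1 := b - (b - a) / 3 with ht1
  have h01 : t0 < t1 := by rw [ht0, ht1]; linarith
  set h := t1 - t0 with hhdef
  have hh : 0 < h := by simp only [hhdef]; linarith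
  have hIcc : Set.Icc t0 t1 ⊆ Set.Ioo a b := by
    intro r hr
    obtain ⟨hr1, hr2⟩ := hr
    constructor
    · rw [ht0] at hr1; linarith
    · rw [ht1] at hr2; linarith
  have hg : ∀ n : ℕ, ∀ r ∈ Set.Icc t0 t1,
      HasDerivAt (fun r => u r n) (Real.sqrt |u r n| + 1 / ((n : ℝ) + 1)) r := by
    intro n r hr
    have hc := (evalCLM n).hasFDerivAt.comp_hasDerivAt r (hu r (hIcc hr))
    have he : ∀ x : ZeroAtInftyContinuousMap ℕ ℝ, evalCLM n x = x n := fun x => rfl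
    simp only [he, hF] at hc
    exact hc
  set η := fun n : ℕ => Real.sqrt (|u t0 n| + 1 / ((n : ℝ) + 1)) with hη
  have hηt : Tendsto η atTop (𝓝 0) := by
    have h1 : Tendsto (fun n : ℕ => |u t0 n| + 1 / ((n : ℝ) + 1)) atTop (𝓝 0) := by
      have h2 := (tendsto_apply_atTop (u t0)).abs
      simp only [abs_zero] at h2
      simpa using h2.add tendsto_one_div_add_atTop_nhds_zero_nat
    have h3 := (Real.continuous_sqrt.tendsto 0).comp h1
    simpa [hη, Function.comp_def] using h3
  have hev : ∀ᶠ n : ℕ in atTop, η n < h / 8 ∧ |u t1 n| < h ^ 2 / 16 := by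
    have e1 : ∀ᶠ n : ℕ in atTop, η n < h / 8 :=
      hηt.eventually (eventually_lt_nhds (by positivity : (0:ℝ) < h / 8))
    have e2 : ∀ᶠ n : ℕ in atTop, |u t1 n| < h ^ 2 / 16 := by
      have h2 := (tendsto_apply_atTop (u t1)).abs
      simp only [abs_zero] at h2
      exact h2.eventually (eventually_lt_nhds (by positivity : (0:ℝ) < h ^ 2 / 16))
    exact e1.and e2
  obtain ⟨n, hn1, hn2⟩ := hev.exists
  set c := t0 + 2 * η n with hc
  have hδ : (0:ℝ) < 1 / ((n : ℝ) + 1) := by positivity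
  have hηnn : 0 ≤ η n := Real.sqrt_nonneg _
  have hηsq : η n ^ 2 = |u t0 n| + 1 / ((n : ℝ) + 1) := Real.sq_sqrt (by positivity)
  have hvt0 : (t0 - c) * |t0 - c| / 4 < u t0 n := by
    have h1 : t0 - c = -(2 * η n) := by rw [hc]; ring
    rw [h1, abs_neg, abs_of_nonneg (by positivity)]
    have h2 : -(2 * η n) * (2 * η n) / 4 = -(η n ^ 2) := by ring
    rw [h2, hηsq]
    have := neg_abs_le (u t0 n)
    linarith
  have hbar := barrier hδ (hg n) (fun r _ => vfun_hasDerivAt c r) hvt0 t1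
    ⟨h01.le, le_refl t1⟩
  have htc : t1 - c = h - 2 * η n := by rw [hc, hhdef]; ring
  have htcge : 3 * h / 4 ≤ t1 - c := by rw [htc]; linarith
  have htcpos : 0 < t1 - c := by linarith
  rw [abs_of_pos htcpos] at hbar
  have hle : u t1 n ≤ |u t1 n| := le_abs_self _
  nlinarith [sq_nonneg (t1 - c - 3 * h / 4)]
end

section
/- Let f : c₀ → c₀ be defined by f(x)_n = √|x_n| + 1/(n+1), and for an infinite subset N = {n₁ < n₂ < ...} of ℕ define the spreading Nf : c₀ → c₀ by (Nf)(x) = Σ_k (√|x_{n_k}| + 1/(n_k+1)) e_{n_k}. Then for any (a_i) ∈ ℓ₁ and any partition of ℕ into infinite pairwise disjoint sets (N_i), the series Σ_i a_i · (N_i f)(x) converges in c₀ for each x ∈ c₀, and the resulting map x ↦ Σ_i a_i (N_i f)(x) is continuous on c₀. -/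
private lemma aux_sqrt_abs (a b : ℝ) (ha : 0 ≤ a) (hb : 0 ≤ b) :
    |Real.sqrt a - Real.sqrt b| ≤ Real.sqrt |a - b| := by
  have key : ∀ u v : ℝ, 0 ≤ u → 0 ≤ v → v ≤ u →
      Real.sqrt u - Real.sqrt v ≤ Real.sqrt (u - v) := by
    intro u v hu hv huv
    have h : Real.sqrt u ≤ Real.sqrt (u - v) + Real.sqrt v := by
      rw [Real.sqrt_le_iff]
      constructor
      · positivity
      · have h1 := Real.sq_sqrt (by linarith : (0:ℝ) ≤ u - v)
        have h2 := Real.sq_sqrt hv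
        have h3 := Real.sqrt_nonneg (u - v)
        have h4 := Real.sqrt_nonneg v
        nlinarith
    linarith
  rcases le_total b a with h | h
  · rw [abs_of_nonneg (by linarith : (0:ℝ) ≤ a - b),
      abs_of_nonneg (sub_nonneg.mpr (Real.sqrt_le_sqrt h))]
    exact key a b ha hb h
  · rw [abs_of_nonpos (by linarith : a - b ≤ 0),
      abs_of_nonpos (sub_nonpos.mpr (Real.sqrt_le_sqrt h))]
    simpa using key b a hb ha h

private lemma c0_norm_le {f : ZeroAtInftyContinuousMap ℕ ℝ} {C : ℝ} (hC : 0 ≤ C)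
    (h : ∀ n, |f n| ≤ C) : ‖f‖ ≤ C := by
  rw [← ZeroAtInftyContinuousMap.norm_toBCF_eq_norm]
  exact (BoundedContinuousFunction.norm_le hC).2 h

private lemma c0_coord_le (f : ZeroAtInftyContinuousMap ℕ ℝ) (n : ℕ) : |f n| ≤ ‖f‖ := by
  rw [← ZeroAtInftyContinuousMap.norm_toBCF_eq_norm]
  exact (f.toBCF).norm_coe_le_norm n

/-- For a partition of `ℕ` into infinite pairwise disjoint sets `N i`, the
spreadings `g i` of Dieudonné's field (coordinate `n` of `g i x` equals
`√|x_n| + 1/(n+1)` if `n ∈ N i` and `0` otherwise) and any `(a_i) ∈ ℓ₁`, the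
series `Σ_i a_i • g i x` converges in `c₀` for each `x`, and the resulting map
is continuous. -/
theorem stmt6 (N : ℕ → Set ℕ) (hinf : ∀ i, (N i).Infinite)
    (hdisj : Pairwise (Function.onFun Disjoint N)) (hcov : (⋃ i, N i) = Set.univ)
    (g : ℕ → ZeroAtInftyContinuousMap ℕ ℝ → ZeroAtInftyContinuousMap ℕ ℝ)
    (hg : ∀ (i : ℕ) (x : ZeroAtInftyContinuousMap ℕ ℝ) (n : ℕ),
      g i x n = Set.indicator (N i) (fun m => Real.sqrt |x m| + 1 / ((m : ℝ) + 1)) n)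
    (a : ℕ → ℝ) (ha : Summable fun i => |a i|) :
    ∃ S : ZeroAtInftyContinuousMap ℕ ℝ → ZeroAtInftyContinuousMap ℕ ℝ,
      Continuous S ∧ ∀ x, HasSum (fun i => a i • g i x) (S x) := by
  have hnorm : ∀ i x, ‖g i x‖ ≤ Real.sqrt ‖x‖ + 1 := by
    intro i x
    apply c0_norm_le (by positivity)
    intro n
    rw [hg]
    by_cases hn : n ∈ N i
    · rw [Set.indicator_of_mem hn]
      have h1 : Real.sqrt |x n| ≤ Real.sqrt ‖x‖ := Real.sqrt_le_sqrt (c0_coord_le x n)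
      have h2 : 1 / ((n : ℝ) + 1) ≤ 1 := by
        rw [div_le_one (by positivity)]; linarith [Nat.cast_nonneg (α := ℝ) n]
      rw [abs_of_nonneg (by positivity)]
      linarith
    · rw [Set.indicator_of_notMem hn]; simp; positivity
  have hsub : ∀ i x y, ‖g i x - g i y‖ ≤ Real.sqrt ‖x - y‖ := by
    intro i x y
    apply c0_norm_le (Real.sqrt_nonneg _)
    intro n
    have hrfl : (g i x - g i y) n = g i x n - g i y n := rfl
    rw [hrfl, hg, hg]
    by_cases hn : n ∈ N i
    · rw [Set.indicator_of_mem hn, Set.indicator_of_mem hn]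
      have h1 : abs (Real.sqrt |x n| - Real.sqrt |y n|) ≤ Real.sqrt (abs (|x n| - |y n|)) :=
        aux_sqrt_abs _ _ (abs_nonneg _) (abs_nonneg _)
      have h2 : abs (|x n| - |y n|) ≤ |x n - y n| := abs_abs_sub_abs_le_abs_sub _ _
      have h3 : |x n - y n| ≤ ‖x - y‖ := by
        have h := c0_coord_le (x - y) n
        have hx : (x - y) n = x n - y n := rfl
        rwa [hx] at h
      calc abs (Real.sqrt |x n| + 1 / ((n : ℝ) + 1) - (Real.sqrt |y n| + 1 / ((n : ℝ) + 1)))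
          = abs (Real.sqrt |x n| - Real.sqrt |y n|) := by ring_nf
        _ ≤ Real.sqrt (abs (|x n| - |y n|)) := h1
        _ ≤ Real.sqrt |x n - y n| := Real.sqrt_le_sqrt h2
        _ ≤ Real.sqrt ‖x - y‖ := Real.sqrt_le_sqrt h3
    · rw [Set.indicator_of_notMem hn, Set.indicator_of_notMem hn]
      simpa using Real.sqrt_nonneg ‖x - y‖
  have hsum : ∀ x, Summable (fun i => a i • g i x) := by
    intro x
    apply Summable.of_norm
    apply Summable.of_nonneg_of_le (fun i => norm_nonneg _)
      (fun i => ?_) (ha.mul_right (Real.sqrt ‖x‖ + 1))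
    have hle : ‖a i • g i x‖ ≤ ‖a i‖ * ‖g i x‖ := norm_smul_le (a i) (g i x)
    rw [Real.norm_eq_abs] at hle
    exact le_trans hle (mul_le_mul_of_nonneg_left (hnorm i x) (abs_nonneg _))
  refine ⟨fun x => ∑' i, a i • g i x, ?_, fun x => (hsum x).hasSum⟩
  set A := ∑' i, |a i| with hA
  have hA0 : 0 ≤ A := tsum_nonneg (fun i => abs_nonneg _)
  have hdiff : ∀ x y : ZeroAtInftyContinuousMap ℕ ℝ,
      ‖(∑' i, a i • g i x) - ∑' i, a i • g i y‖ ≤ A * Real.sqrt ‖x - y‖ := by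
    intro x y
    rw [← Summable.tsum_sub (hsum x) (hsum y)]
    have hb : ∀ i, ‖a i • g i x - a i • g i y‖ ≤ |a i| * Real.sqrt ‖x - y‖ := by
      intro i
      have he : a i • g i x - a i • g i y = a i • (g i x - g i y) :=
        (smul_sub (a i) (g i x) (g i y)).symm
      rw [he]
      have hle : ‖a i • (g i x - g i y)‖ ≤ ‖a i‖ * ‖g i x - g i y‖ :=
        norm_smul_le (a i) (g i x - g i y)
      rw [Real.norm_eq_abs] at hle
      exact le_trans hle (mul_le_mul_of_nonneg_left (hsub i x y) (abs_nonneg _))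
    have hsn : Summable (fun i => ‖a i • g i x - a i • g i y‖) :=
      Summable.of_nonneg_of_le (fun i => norm_nonneg _) hb (ha.mul_right _)
    calc ‖∑' i, (a i • g i x - a i • g i y)‖
        ≤ ∑' i, ‖a i • g i x - a i • g i y‖ := norm_tsum_le_tsum_norm hsn
      _ ≤ ∑' i, |a i| * Real.sqrt ‖x - y‖ := Summable.tsum_le_tsum hb hsn (ha.mul_right _)
      _ = A * Real.sqrt ‖x - y‖ := by rw [tsum_mul_right]
  rw [Metric.continuous_iff]
  intro x ε hε
  refine ⟨(ε / (A + 1)) ^ 2, by positivity, fun y hy => ?_⟩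
  rw [dist_eq_norm] at hy ⊢
  calc ‖(∑' i, a i • g i y) - ∑' i, a i • g i x‖
      ≤ A * Real.sqrt ‖y - x‖ := hdiff y x
    _ < ε := by
        have h1 : Real.sqrt ‖y - x‖ < ε / (A + 1) := by
          calc Real.sqrt ‖y - x‖ < Real.sqrt ((ε / (A + 1)) ^ 2) :=
                Real.sqrt_lt_sqrt (norm_nonneg _) hy
            _ = ε / (A + 1) := Real.sqrt_sq (by positivity)
        calc A * Real.sqrt ‖y - x‖ ≤ A * (ε / (A + 1)) := by
              rcases eq_or_lt_of_le hA0 with h | h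
              · simp [← h]
              · exact le_of_lt (mul_lt_mul_of_pos_left h1 h)
          _ < ε := by
              rw [mul_div_assoc', div_lt_iff₀ (by positivity)]
              nlinarith
end

section
/- The linear map L : ℓ₁ → C(c₀), L((a_i)) = Σ_i a_i · N_i f, where (N_i) is a partition of ℕ into infinite pairwise disjoint subsets and N_i f is the spreading of the field f(x)_n = √|x_n| + 1/(n+1) over N_i, is injective. -/
/-- The linear map `L : ℓ₁ → C(c₀)`, `L((a_i)) = Σ_i a_i • N_i f`, built from
the spreadings of Dieudonné's field over a partition of `ℕ` into infinite
pairwise disjoint sets, is injective. -/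
theorem stmt7 (N : ℕ → Set ℕ) (hinf : ∀ i, (N i).Infinite)
    (hdisj : Pairwise (Function.onFun Disjoint N)) (hcov : (⋃ i, N i) = Set.univ)
    (g : ℕ → ZeroAtInftyContinuousMap ℕ ℝ → ZeroAtInftyContinuousMap ℕ ℝ)
    (hg : ∀ (i : ℕ) (x : ZeroAtInftyContinuousMap ℕ ℝ) (n : ℕ),
      g i x n = Set.indicator (N i) (fun m => Real.sqrt |x m| + 1 / ((m : ℝ) + 1)) n) :
    Function.Injective (fun a : lp (fun _ : ℕ => ℝ) 1 =>
      fun x : ZeroAtInftyContinuousMap ℕ ℝ => ∑' i, a i • g i x) := by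
  -- evaluation at `n ∈ N i` of the series at `x = 0` recovers `a i / (n+1)`
  have hg0 : ∀ i n, g i 0 n = Set.indicator (N i) (fun m => 1 / ((m : ℝ) + 1)) n := by
    intro i n
    rw [hg]
    congr 1
    ext m
    simp [Real.sqrt_zero]
  have hle : ∀ i, ‖g i 0‖ ≤ 1 := by
    intro i
    rw [← ZeroAtInftyContinuousMap.norm_toBCF_eq_norm]
    refine BoundedContinuousFunction.norm_le zero_le_one |>.2 fun n => ?_
    have : (g i 0).toBCF n = g i 0 n := rfl
    rw [this, hg0]
    rw [Real.norm_eq_abs]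
    rcases Set.indicator_eq_zero_or_self (N i) (fun m => 1 / ((m : ℝ) + 1)) n with h | h
    · rw [h, abs_zero]; exact zero_le_one
    · rw [h, abs_of_nonneg (by positivity)]
      rw [div_le_one (by positivity)]
      linarith [Nat.cast_nonneg (α := ℝ) n]
  have key : ∀ (a : lp (fun _ : ℕ => ℝ) 1) (i : ℕ) (n : ℕ), n ∈ N i →
      (∑' j, a j • g j 0) n = a i * (1 / ((n : ℝ) + 1)) := by
    intro a i n hn
    have hsa : Summable fun j => ‖a j‖ := by
      have := (lp.memℓp a).summable (p := 1) (by norm_num)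
      simpa using this
    have hsum : Summable fun j => (a j : ℝ) • g j 0 := by
      refine Summable.of_norm_bounded hsa fun j => ?_
      refine (norm_smul_le (a j) (g j 0)).trans ?_
      calc ‖a j‖ * ‖g j 0‖ ≤ ‖a j‖ * 1 :=
            mul_le_mul_of_nonneg_left (hle j) (norm_nonneg _)
        _ = ‖a j‖ := mul_one _
    -- evaluation as a continuous additive map
    let ev : ZeroAtInftyContinuousMap ℕ ℝ →+ ℝ :=
      { toFun := fun x => x n
        map_zero' := rfl
        map_add' := fun x y => rfl }
    have hcont : Continuous ev := by
      have h1 : Continuous fun f : BoundedContinuousFunction ℕ ℝ => f n :=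
        (BoundedContinuousFunction.evalCLM ℝ n).continuous
      exact h1.comp ((ZeroAtInftyContinuousMap.isometry_toBCF (α := ℕ) (β := ℝ)).continuous)
    have hmap : HasSum (fun j => ev (a j • g j 0)) (ev (∑' j, a j • g j 0)) :=
      hsum.hasSum.map ev hcont
    have hval : ∀ j, ev (a j • g j 0) = if j = i then a i * (1 / ((n : ℝ) + 1)) else 0 := by
      intro j
      have : ev (a j • g j 0) = a j * g j 0 n := rfl
      rw [this, hg0]
      by_cases hji : j = i
      · subst hji
        rw [Set.indicator_of_mem hn, if_pos rfl]
      · have hnj : n ∉ N j := fun hmem =>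
          (hdisj hji).le_bot (Set.mem_inter hmem hn)
        rw [Set.indicator_of_notMem hnj, if_neg hji, mul_zero]
    have hsingle : HasSum (fun j => ev (a j • g j 0)) (a i * (1 / ((n : ℝ) + 1))) := by
      have := hasSum_ite_eq i (a i * (1 / ((n : ℝ) + 1)))
      refine this.congr_fun fun j => ?_
      rw [hval j]
    exact (hmap.unique hsingle)
  intro a b hab
  have hab' := congrFun hab (0 : ZeroAtInftyContinuousMap ℕ ℝ)
  simp only at hab'
  ext i
  obtain ⟨n, hn⟩ := (hinf i).nonempty
  have h1 := key a i n hn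
  have h2 := key b i n hn
  rw [hab'] at h1
  rw [h2] at h1
  have hpos : (1 / ((n : ℝ) + 1)) ≠ 0 := by positivity
  exact mul_right_cancel₀ hpos h1.symm
end

section
/- The set K(c₀) of continuous vector fields f : c₀ → c₀ for which the autonomous ODE u' = f(u) has no local solution is spaceable in C(c₀): K(c₀) ∪ {0} contains a closed subspace of C(c₀) of dimension continuum. -/
open Filter Topology Set Cardinal

noncomputable section

abbrev c0 := ZeroAtInftyContinuousMap ℕ ℝ

/-! basic c0 lemmas -/

theorem zai_tendsto (f : c0) : Tendsto f cofinite (𝓝 0) := by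
  have := f.zero_at_infty'
  rwa [cocompact_eq_atTop, ← Nat.cofinite_eq_atTop] at this

theorem zai_finite (f : c0) {ε : ℝ} (hε : 0 < ε) : {n | ε ≤ |f n|}.Finite := by
  have h := (zai_tendsto f)
  rw [Metric.tendsto_nhds] at h
  have h2 := h ε hε
  rw [Filter.eventually_cofinite] at h2
  refine h2.subset fun n hn => ?_
  simp only [Real.dist_eq, sub_zero, mem_setOf_eq, not_lt] at *
  exact hn

def mkc0 (f : ℕ → ℝ) (h : ∀ ε > 0, {n | ε ≤ |f n|}.Finite) : c0 :=
  ⟨⟨f, continuous_of_discreteTopology⟩, by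
    rw [cocompact_eq_atTop, ← Nat.cofinite_eq_atTop, Metric.tendsto_nhds]
    intro ε hε
    rw [Filter.eventually_cofinite]
    refine (h ε hε).subset fun n hn => ?_
    simp only [Real.dist_eq, sub_zero, mem_setOf_eq, not_lt] at *
    exact hn⟩

@[simp] theorem mkc0_apply (f : ℕ → ℝ) (h) (n : ℕ) : mkc0 f h n = f n := rfl

theorem zai_apply_le_norm (f : c0) (n : ℕ) : |f n| ≤ ‖f‖ := by
  rw [← ZeroAtInftyContinuousMap.norm_toBCF_eq_norm]
  exact f.toBCF.norm_coe_le_norm n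

theorem zai_norm_le (f : c0) {C : ℝ} (hC : 0 ≤ C) (h : ∀ n, |f n| ≤ C) : ‖f‖ ≤ C := by
  rw [← ZeroAtInftyContinuousMap.norm_toBCF_eq_norm]
  exact (BoundedContinuousFunction.norm_le hC).mpr h

def evalc0 (n : ℕ) : c0 →L[ℝ] ℝ :=
  LinearMap.mkContinuous
    { toFun := fun f => f n
      map_add' := fun f g => by simp
      map_smul' := fun a f => by simp } 1
    (fun f => by simpa using zai_apply_le_norm f n)

@[simp] theorem evalc0_apply (n : ℕ) (f : c0) : evalc0 n f = f n := rfl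

/-! sqrt Hölder -/

theorem sqrt_sub_le {a b : ℝ} (hb : 0 ≤ b) (h : b ≤ a) :
    Real.sqrt a - Real.sqrt b ≤ Real.sqrt (a - b) := by
  have h1 : Real.sqrt a ≤ Real.sqrt b + Real.sqrt (a - b) := by
    have h2 : a ≤ (Real.sqrt b + Real.sqrt (a - b)) ^ 2 := by
      have e1 := Real.sq_sqrt hb
      have e2 := Real.sq_sqrt (sub_nonneg.2 h)
      nlinarith [Real.sqrt_nonneg b, Real.sqrt_nonneg (a - b)]
    calc Real.sqrt a ≤ Real.sqrt ((Real.sqrt b + Real.sqrt (a - b)) ^ 2) :=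
          Real.sqrt_le_sqrt h2
      _ = _ := Real.sqrt_sq (by positivity)
  linarith

theorem abs_sqrt_sub_sqrt_le {a b : ℝ} (ha : 0 ≤ a) (hb : 0 ≤ b) :
    |Real.sqrt a - Real.sqrt b| ≤ Real.sqrt |a - b| := by
  rcases le_total b a with h | h
  · rw [abs_of_nonneg (sub_nonneg.2 (Real.sqrt_le_sqrt h)), abs_of_nonneg (sub_nonneg.2 h)]
    exact sqrt_sub_le hb h
  · rw [abs_of_nonpos (sub_nonpos.2 (Real.sqrt_le_sqrt h)), abs_of_nonpos (sub_nonpos.2 h),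
      neg_sub, neg_sub]
    exact sqrt_sub_le ha h

theorem key_sqrt (s t : ℝ) : abs (Real.sqrt |s| - Real.sqrt |t|) ≤ Real.sqrt |s - t| := by
  refine (abs_sqrt_sub_sqrt_le (abs_nonneg s) (abs_nonneg t)).trans ?_
  exact Real.sqrt_le_sqrt (abs_abs_sub_abs_le_abs_sub s t)

def pe : ℕ ≃ ℕ × ℕ := (Denumerable.eqv (ℕ × ℕ)).symm
def kk (n : ℕ) : ℕ := (pe n).1
def jj (n : ℕ) : ℕ := (pe n).2
def pr (k j : ℕ) : ℕ := pe.symm (k, j)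
@[simp] theorem kk_pr (k j : ℕ) : kk (pr k j) = k := by simp [kk, pr]
@[simp] theorem jj_pr (k j : ℕ) : jj (pr k j) = j := by simp [jj, pr]
theorem pr_injective (k : ℕ) : Function.Injective (pr k) := fun a b h => by
  have := pe.symm.injective h
  simpa using this

def η (j : ℕ) : ℝ := ((j : ℝ) + 1)⁻¹
theorem η_pos (j : ℕ) : 0 < η j := by unfold η; positivity
theorem η_le_one (j : ℕ) : η j ≤ 1 := by
  have h1 : (1:ℝ) ≤ (j:ℝ) + 1 := by linarith [Nat.cast_nonneg (α := ℝ) j]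
  have h2 : (0:ℝ) < (j:ℝ) + 1 := by positivity
  rw [η]
  rw [inv_le_one_iff₀]
  right; exact h1
@[simp] theorem η_zero : η 0 = 1 := by norm_num [η]

def φ (c : c0) (x : c0) (n : ℕ) : ℝ := c (kk n) * (Real.sqrt |x n| + η (jj n))

theorem φ_finite (c x : c0) : ∀ ε > 0, {n | ε ≤ |φ c x n|}.Finite := by
  intro ε hε
  have hc1 : (0:ℝ) < ‖c‖ + 1 := by positivity
  set δ := ε / (2 * (‖c‖ + 1)) with hδ
  have hδpos : 0 < δ := by positivity
  have hsub : {n | ε ≤ |φ c x n|} ⊆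
      {n | δ ^ 2 ≤ |x n|} ∪ (pe ⁻¹' ({k | ε / 2 ≤ |c k|} ×ˢ {j | δ ≤ η j})) := by
    intro n hn
    simp only [mem_setOf_eq, φ] at hn
    have hck : |c (kk n)| ≤ ‖c‖ := zai_apply_le_norm c (kk n)
    have hbound : ε ≤ ‖c‖ * Real.sqrt |x n| + |c (kk n)| * η (jj n) := by
      calc ε ≤ |c (kk n) * (Real.sqrt |x n| + η (jj n))| := hn
        _ = |c (kk n)| * (Real.sqrt |x n| + η (jj n)) := by
            rw [abs_mul, abs_of_nonneg (add_nonneg (Real.sqrt_nonneg _) (η_pos _).le)]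
        _ ≤ ‖c‖ * Real.sqrt |x n| + |c (kk n)| * η (jj n) := by
            nlinarith [Real.sqrt_nonneg |x n|, η_pos (jj n), abs_nonneg (c (kk n))]
    simp only [Set.mem_union, Set.mem_preimage, Set.mem_prod]
    rcases le_or_gt (ε/2) (‖c‖ * Real.sqrt |x n|) with h1 | h1
    · left
      show δ ^ 2 ≤ |x n|
      have hs : δ ≤ Real.sqrt |x n| := by
        rw [hδ, div_le_iff₀ (by positivity)]
        nlinarith [Real.sqrt_nonneg |x n|]
      nlinarith [Real.sq_sqrt (abs_nonneg (x n)), hδpos.le]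
    · right
      have h2 : ε/2 ≤ |c (kk n)| * η (jj n) := by linarith
      constructor
      · show ε/2 ≤ |c (kk n)|
        nlinarith [η_le_one (jj n), η_pos (jj n), abs_nonneg (c (kk n))]
      · show δ ≤ η (jj n)
        rw [hδ, div_le_iff₀ (by positivity)]
        nlinarith [η_pos (jj n), abs_nonneg (c (kk n))]
  refine (Set.Finite.union ?_ ?_).subset hsub
  · exact zai_finite x (by positivity)
  · refine Set.Finite.preimage pe.injective.injOn ?_
    refine Set.Finite.prod (zai_finite c (by positivity)) ?_
    refine (Set.finite_Iic (⌊δ⁻¹⌋₊)).subset fun j hj => ?_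
    simp only [mem_setOf_eq] at hj
    have hj1 : (0:ℝ) < (j:ℝ) + 1 := by positivity
    have h3 : δ * ((j:ℝ) + 1) ≤ 1 := by
      have := mul_le_mul_of_nonneg_right hj hj1.le
      rwa [η, inv_mul_cancel₀ (ne_of_gt hj1)] at this
    have : (j:ℝ) ≤ δ⁻¹ := by
      rw [← mul_le_mul_iff_right₀ hδpos, mul_inv_cancel₀ hδpos.ne']
      nlinarith
    exact Nat.le_floor this

def Tc (c : c0) (x : c0) : c0 := mkc0 (φ c x) (φ_finite c x)

@[simp] theorem Tc_apply (c x : c0) (n : ℕ) :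
    Tc c x n = c (kk n) * (Real.sqrt |x n| + η (jj n)) := by simp [Tc, φ]

def T : c0 →ₗ[ℝ] (c0 → c0) where
  toFun c := Tc c
  map_add' c c' := by
    funext x; ext n
    simp only [Tc_apply, Pi.add_apply, ZeroAtInftyContinuousMap.coe_add]
    ring
  map_smul' a c := by
    funext x; ext n
    simp only [Tc_apply, Pi.smul_apply, ZeroAtInftyContinuousMap.coe_smul,
      RingHom.id_apply, smul_eq_mul]
    ring

theorem Tc_zero_pr (c : c0) (k : ℕ) : Tc c 0 (pr k 0) = c k := by
  simp

theorem Tc_neg_neg (c x : c0) : Tc (-c) (-x) = -(Tc c x) := by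
  ext n
  simp only [Tc_apply, ZeroAtInftyContinuousMap.coe_neg, Pi.neg_apply, abs_neg]
  ring

theorem Tc_cont (c : c0) : Continuous (Tc c) := by
  rw [Metric.continuous_iff]
  intro x ε hε
  have hc1 : (0:ℝ) < ‖c‖ + 1 := by positivity
  refine ⟨(ε/(2*(‖c‖+1)))^2, by positivity, fun y hy => ?_⟩
  rw [dist_eq_norm]
  have key : ∀ n, |(Tc c y - Tc c x) n| ≤ ε/2 := by
    intro n
    have h1 : (Tc c y - Tc c x) n
        = c (kk n) * (Real.sqrt |y n| - Real.sqrt |x n|) := by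
      simp only [ZeroAtInftyContinuousMap.coe_sub, Pi.sub_apply, Tc_apply]
      ring
    rw [h1, abs_mul]
    have h2 : abs (Real.sqrt |y n| - Real.sqrt |x n|) ≤ Real.sqrt (dist y x) := by
      refine (key_sqrt _ _).trans (Real.sqrt_le_sqrt ?_)
      have := zai_apply_le_norm (y - x) n
      simpa [dist_eq_norm, ZeroAtInftyContinuousMap.coe_sub, Pi.sub_apply] using this
    have h3 : Real.sqrt (dist y x) ≤ ε/(2*(‖c‖+1)) := by
      refine (Real.sqrt_le_sqrt hy.le).trans ?_
      rw [Real.sqrt_sq (by positivity)]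
    have h4 : |c (kk n)| ≤ ‖c‖ := zai_apply_le_norm c (kk n)
    calc |c (kk n)| * abs (Real.sqrt |y n| - Real.sqrt |x n|)
        ≤ ‖c‖ * (ε/(2*(‖c‖+1))) := by
          refine mul_le_mul h4 (h2.trans h3) (abs_nonneg _) (norm_nonneg c)
      _ ≤ ε/2 := by
          rw [mul_div_assoc', div_le_div_iff₀ (by positivity) (by norm_num)]
          nlinarith [norm_nonneg c, hε.le]
  calc ‖Tc c y - Tc c x‖ ≤ ε/2 := zai_norm_le _ (by positivity) key
    _ < ε := by linarith


theorem geomLI : LinearIndependent ℝ (fun r : Ioo (0:ℝ) 1 => (fun n : ℕ => (r:ℝ)^n)) :=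
  (linearIndependent_monoidHom (Multiplicative ℕ) ℝ).comp
    (fun r : Ioo (0:ℝ) 1 => powersHom ℝ (r:ℝ))
    ((powersHom ℝ).injective.comp Subtype.val_injective)

-- coe as linear map
def coeLM : c0 →ₗ[ℝ] (ℕ → ℝ) where
  toFun f := ⇑f
  map_add' f g := by ext n; simp
  map_smul' a f := by ext n; simp

-- geometric elements of c0
def geom (r : Ioo (0:ℝ) 1) : c0 :=
  ⟨⟨fun n => (r:ℝ)^n, continuous_of_discreteTopology⟩, by
    rw [cocompact_eq_atTop]
    exact tendsto_pow_atTop_nhds_zero_of_lt_one (le_of_lt r.2.1) r.2.2⟩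

theorem rank_c0_ge : Cardinal.continuum ≤ Module.rank ℝ c0 := by
  have li : LinearIndependent ℝ geom := by
    apply LinearIndependent.of_comp coeLM
    exact geomLI
  simpa [Cardinal.mk_Ioo_real (zero_lt_one)] using li.cardinal_le_rank

theorem rank_c0_le : Module.rank ℝ c0 ≤ Cardinal.continuum := by
  refine (rank_le_card _ _).trans ?_
  have : #c0 ≤ #(ℕ → ℝ) := Cardinal.mk_le_of_injective (DFunLike.coe_injective)
  refine this.trans ?_
  rw [Cardinal.mk_arrow]
  simp [Cardinal.mk_real, Cardinal.continuum_power_aleph0]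

theorem sqrt_growth {γ s t1 : ℝ} (hγ : 0 < γ) (hst : s ≤ t1) {v d : ℝ → ℝ}
    (hd : ∀ t ∈ Icc s t1, HasDerivAt v (d t) t)
    (hdpos : ∀ t ∈ Icc s t1, 0 < d t)
    (hdge : ∀ t ∈ Icc s t1, γ * Real.sqrt |v t| ≤ d t)
    (hv0 : 0 ≤ v s) :
    γ/2 * (t1 - s) ≤ Real.sqrt (v t1) := by
  rcases eq_or_lt_of_le hst with rfl | hlt
  · simpa using Real.sqrt_nonneg (v s)
  have hcont : ContinuousOn v (Icc s t1) :=
    fun x hx => (hd x hx).continuousAt.continuousWithinAt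
  have smono : StrictMonoOn v (Icc s t1) := by
    apply strictMonoOn_of_deriv_pos (convex_Icc s t1) hcont
    intro x hx
    rw [interior_Icc] at hx
    have hx' : x ∈ Icc s t1 := Ioo_subset_Icc_self hx
    rw [(hd x hx').deriv]
    exact hdpos x hx'
  have step : ∀ s' ∈ Ioo s t1, γ/2 * (t1 - s') ≤ Real.sqrt (v t1) := by
    intro s' hs'
    have hs'I : s' ∈ Icc s t1 := Ioo_subset_Icc_self hs'
    have hvpos : ∀ t ∈ Icc s' t1, 0 < v t := by
      intro t ht
      have h1 : v s < v s' := smono (left_mem_Icc.2 hst) hs'I hs'.1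
      have h2 : v s' ≤ v t :=
        smono.monotoneOn hs'I (Icc_subset_Icc hs'.1.le le_rfl ht) ht.1
      linarith
    set w : ℝ → ℝ := fun t => Real.sqrt (v t) - γ/2 * t with hw
    have hwmono : MonotoneOn w (Icc s' t1) := by
      apply monotoneOn_of_deriv_nonneg (convex_Icc s' t1)
      · exact ((Real.continuous_sqrt.comp_continuousOn
            (hcont.mono (Icc_subset_Icc hs'.1.le le_rfl))).sub
          (continuousOn_const.mul continuousOn_id))
      · intro x hx
        rw [interior_Icc] at hx
        have hxI : x ∈ Icc s' t1 := Ioo_subset_Icc_self hx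
        have hxI2 : x ∈ Icc s t1 := Icc_subset_Icc hs'.1.le le_rfl hxI
        have hvx : 0 < v x := hvpos x hxI
        have hds : HasDerivAt (fun t => Real.sqrt (v t))
            (1 / (2 * Real.sqrt (v x)) * d x) x :=
          (Real.hasDerivAt_sqrt hvx.ne').comp x (hd x hxI2)
        exact ((hds.sub ((hasDerivAt_id x).const_mul (γ/2))).differentiableAt).differentiableWithinAt
      · intro x hx
        rw [interior_Icc] at hx
        have hxI : x ∈ Icc s' t1 := Ioo_subset_Icc_self hx
        have hxI2 : x ∈ Icc s t1 := Icc_subset_Icc hs'.1.le le_rfl hxI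
        have hvx : 0 < v x := hvpos x hxI
        have hds : HasDerivAt (fun t => Real.sqrt (v t))
            (1 / (2 * Real.sqrt (v x)) * d x) x :=
          (Real.hasDerivAt_sqrt hvx.ne').comp x (hd x hxI2)
        have hwd : HasDerivAt w (1 / (2 * Real.sqrt (v x)) * d x - γ/2 * 1) x :=
          hds.sub ((hasDerivAt_id x).const_mul (γ/2))
        rw [hwd.deriv]
        have hsq : 0 < Real.sqrt (v x) := Real.sqrt_pos.2 hvx
        have hge : γ * Real.sqrt (v x) ≤ d x := by
          have := hdge x hxI2
          rwa [abs_of_pos hvx] at this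
        rw [sub_nonneg, mul_one, one_div, inv_mul_eq_div, le_div_iff₀ (by positivity)]
        nlinarith
    have h5 : w s' ≤ w t1 := hwmono (left_mem_Icc.2 hs'.2.le) (right_mem_Icc.2 hs'.2.le) hs'.2.le
    have h6 : 0 ≤ Real.sqrt (v s') := Real.sqrt_nonneg _
    simp only [hw] at h5
    linarith
  have tl : Tendsto (fun s' => γ/2 * (t1 - s')) (𝓝[>] s) (𝓝 (γ/2 * (t1 - s))) :=
    ((continuous_const.mul (continuous_const.sub continuous_id)).tendsto s).mono_left
      nhdsWithin_le_nhds
  refine le_of_tendsto tl ?_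
  filter_upwards [Ioo_mem_nhdsGT_of_mem (left_mem_Ico.2 hlt)] with s' hs'
  exact step s' hs'

theorem no_solution {c : c0} {k : ℕ} (hk : 0 < c k) {a b : ℝ} (hab : a < b)
    {u : ℝ → c0} (hu : ∀ t ∈ Ioo a b, HasDerivAt u (Tc c (u t)) t) : False := by
  set γ := c k with hγdef
  set δ := (b - a) / 4 with hδdef
  have hδ : 0 < δ := by rw [hδdef]; linarith
  set t0 := a + δ with ht0
  set m := a + 2*δ with hm
  set t1 := a + 3*δ with ht1
  have hIcc : Icc t0 t1 ⊆ Ioo a b := fun t ht => ⟨by simp only [ht0] at ht; linarith [ht.1],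
    by simp only [ht1, hδdef] at ht ⊢; linarith [ht.2]⟩
  set β := (γ/2 * δ)^2 with hβ
  have hβpos : 0 < β := by positivity
  -- coordinate derivatives
  have hcoord : ∀ n, ∀ t ∈ Ioo a b, HasDerivAt (fun t => u t n)
      (c (kk n) * (Real.sqrt |u t n| + η (jj n))) t := by
    intro n t ht
    have h1 := (evalc0 n).hasFDerivAt.comp_hasDerivAt t (hu t ht)
    simpa [Function.comp_def] using h1
  -- the dichotomy
  have claim : ∀ j : ℕ, β ≤ |u t1 (pr k j)| ∨ β ≤ |u t0 (pr k j)| := by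
    intro j
    set n := pr k j with hn
    set v : ℝ → ℝ := fun t => u t n with hv
    set d : ℝ → ℝ := fun t => γ * (Real.sqrt |v t| + η j) with hd
    have hdv : ∀ t ∈ Ioo a b, HasDerivAt v (d t) t := by
      intro t ht
      have := hcoord n t ht
      simpa [hn, hv, hd, hγdef] using this
    have hdpos : ∀ t, 0 < d t := fun t => by
      have := η_pos j
      have := Real.sqrt_nonneg |v t|
      simp only [hd]
      nlinarith
    have hdge : ∀ t, γ * Real.sqrt |v t| ≤ d t := fun t => by
      have := η_pos j
      simp only [hd]
      nlinarith
    by_cases hneg : ∀ s ∈ Icc t0 m, v s < 0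
    · right
      -- reflected solution
      set r : ℝ → ℝ := fun t => t0 + m - t with hr
      have hrmem : ∀ t ∈ Icc t0 m, r t ∈ Icc t0 m := fun t ht =>
        ⟨by simp only [hr]; linarith [ht.2], by simp only [hr]; linarith [ht.1]⟩
      have hIcc2 : Icc t0 m ⊆ Ioo a b := fun t ht =>
        hIcc ⟨ht.1, le_trans ht.2 (by simp only [hm, ht1]; linarith)⟩
      have hvd' : ∀ t ∈ Icc t0 m, HasDerivAt (fun t => -(v (r t))) (d (r t)) t := by
        intro t ht
        have hrt : HasDerivAt r (-1) t := by
          have := ((hasDerivAt_id t).const_sub (t0 + m))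
          simpa [hr] using this
        have hcomp := (hdv (r t) (hIcc2 (hrmem t ht))).comp t hrt
        have := hcomp.neg
        rw [show -(d (r t) * -1) = d (r t) by ring] at this
        exact this
      have hgrow := sqrt_growth hk (show t0 ≤ m by simp only [ht0, hm]; linarith)
        hvd' (fun t _ => hdpos (r t)) (fun t _ => by simpa [abs_neg] using hdge (r t))
        (by
          have : v m < 0 := hneg m (right_mem_Icc.2 (by simp only [ht0, hm]; linarith))
          simp only [hr]
          have hrt0 : t0 + m - t0 = m := by ring
          rw [hrt0]
          linarith)
      have hrm : r m = t0 := by simp only [hr]; ring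
      rw [hrm] at hgrow
      have hmt0 : m - t0 = δ := by simp only [ht0, hm]; ring
      rw [hmt0] at hgrow
      have hvt0 : v t0 < 0 := hneg t0 (left_mem_Icc.2 (by simp only [ht0, hm]; linarith))
      have h2 : β ≤ -(v t0) := by
        calc β = (γ/2*δ)^2 := hβ
          _ ≤ (Real.sqrt (-(v t0)))^2 := pow_le_pow_left₀ (by positivity) hgrow 2
          _ = -(v t0) := Real.sq_sqrt (by linarith)
      exact h2.trans (neg_le_abs _)
    · left
      push_neg at hneg
      obtain ⟨s, hsI, hs0⟩ := hneg
      have hst1 : s ≤ t1 := le_trans hsI.2 (by simp only [hm, ht1]; linarith)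
      have hsub : Icc s t1 ⊆ Ioo a b := fun t ht => hIcc ⟨le_trans hsI.1 ht.1, ht.2⟩
      have hgrow := sqrt_growth hk hst1 (fun t ht => hdv t (hsub ht))
        (fun t _ => hdpos t) (fun t _ => hdge t) hs0
      have hts : δ ≤ t1 - s := by
        have := hsI.2
        simp only [hm, ht1] at *
        linarith
      have h4 : γ/2 * δ ≤ Real.sqrt (v t1) := by
        refine le_trans ?_ hgrow
        have : 0 < γ := hk
        nlinarith
      have hpos : 0 < v t1 := by
        have hgd : (0:ℝ) < γ/2 * δ := by positivity
        exact Real.sqrt_pos.1 (lt_of_lt_of_le hgd h4)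
      have h5 : β ≤ v t1 := by
        calc β = (γ/2*δ)^2 := hβ
          _ ≤ (Real.sqrt (v t1))^2 := pow_le_pow_left₀ (by positivity) h4 2
          _ = v t1 := Real.sq_sqrt hpos.le
      exact le_trans h5 (le_abs_self _)
  -- contradiction with zero-at-infinity
  have hA := zai_finite (u t1) hβpos
  have hB := zai_finite (u t0) hβpos
  have hsub : Set.range (pr k) ⊆ {n | β ≤ |u t1 n|} ∪ {n | β ≤ |u t0 n|} := by
    rintro _ ⟨j, rfl⟩
    rcases claim j with h | h
    · exact Or.inl h
    · exact Or.inr h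
  exact ((hA.union hB).subset hsub).not_infinite
    (Set.infinite_range_of_injective (pr_injective k))


theorem pr0_injective : Function.Injective (fun k => pr k 0) := fun a b h => by
  have := pe.symm.injective h
  simpa using this

theorem T_injective : Function.Injective T := by
  intro c c' hcc
  ext k
  have h1 := congrArg (fun f : c0 → c0 => f 0 (pr k 0)) hcc
  have h2 : Tc c 0 (pr k 0) = Tc c' 0 (pr k 0) := h1
  rwa [Tc_zero_pr, Tc_zero_pr] at h2

theorem rank_c0 : Module.rank ℝ c0 = Cardinal.continuum :=
  le_antisymm rank_c0_le rank_c0_ge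


def 𝔖 : Set (Set c0) := {B : Set c0 | Bornology.IsBounded B}

theorem closedC : IsClosed {h₀ : UniformOnFun c0 c0 𝔖 |
    ∃ c, Tc c = UniformOnFun.toFun 𝔖 h₀} := by
  refine isClosed_of_closure_subset fun h hmem => ?_
  rw [mem_closure_iff_nhds] at hmem
  have approx : ∀ B ∈ 𝔖, ∀ ε > 0, ∃ c : c0,
      ∀ x ∈ B, dist (UniformOnFun.toFun 𝔖 h x) (Tc c x) < ε := by
    intro B hB ε hε
    have hU := UniformOnFun.gen_mem_nhds c0 (𝔖 := 𝔖) h hB (Metric.dist_mem_uniformity hε)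
    obtain ⟨g, hg1, c, hc⟩ := hmem _ hU
    exact ⟨c, fun x hx => by have := hg1 x hx; rw [← hc] at this; exact this⟩
  set h0 : c0 := UniformOnFun.toFun 𝔖 h 0 with hh0
  have hcfin : ∀ ε > 0, {k | ε ≤ |h0 (pr k 0)|}.Finite := by
    intro ε hε
    exact Set.Finite.preimage (f := fun k => pr k 0) pr0_injective.injOn (zai_finite h0 hε)
  set cstar : c0 := mkc0 (fun k => h0 (pr k 0)) hcfin with hcstar
  refine ⟨cstar, ?_⟩
  funext x
  ext n
  have key : ∀ ε > 0, |UniformOnFun.toFun 𝔖 h x n - Tc cstar x n|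
      ≤ ε * (Real.sqrt ‖x‖ + 2) := by
    intro ε hε
    have hBb : ({0, x} : Set c0) ∈ 𝔖 :=
      ((Set.finite_singleton x).insert 0).isBounded
    obtain ⟨c, hc⟩ := approx {0, x} hBb ε hε
    have h1 := hc 0 (Or.inl rfl)
    have h2 := hc x (Or.inr rfl)
    have hco : |cstar (kk n) - c (kk n)| ≤ ε := by
      have hcoord : |(h0 - Tc c 0) (pr (kk n) 0)| ≤ ‖h0 - Tc c 0‖ :=
        zai_apply_le_norm _ _
      have : (h0 - Tc c 0) (pr (kk n) 0) = cstar (kk n) - c (kk n) := by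
        simp [hcstar, Tc_zero_pr]
      rw [this] at hcoord
      rw [← dist_eq_norm] at hcoord
      exact hcoord.trans h1.le
    have h3 : |UniformOnFun.toFun 𝔖 h x n - Tc c x n| ≤ ε := by
      have hcoord : |(UniformOnFun.toFun 𝔖 h x - Tc c x) n|
          ≤ ‖UniformOnFun.toFun 𝔖 h x - Tc c x‖ := zai_apply_le_norm _ _
      rw [← dist_eq_norm] at hcoord
      simp only [ZeroAtInftyContinuousMap.coe_sub, Pi.sub_apply] at hcoord
      exact hcoord.trans h2.le
    have h4 : |Tc cstar x n - Tc c x n| ≤ ε * (Real.sqrt ‖x‖ + 1) := by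
      have heq : Tc cstar x n - Tc c x n
          = (cstar (kk n) - c (kk n)) * (Real.sqrt |x n| + η (jj n)) := by
        simp only [Tc_apply]; ring
      rw [heq, abs_mul, abs_of_nonneg (add_nonneg (Real.sqrt_nonneg _) (η_pos _).le)]
      have hs : Real.sqrt |x n| ≤ Real.sqrt ‖x‖ :=
        Real.sqrt_le_sqrt (zai_apply_le_norm x n)
      have := η_le_one (jj n)
      have := η_pos (jj n)
      have habs : (0:ℝ) ≤ |cstar (kk n) - c (kk n)| := abs_nonneg _
      nlinarith [Real.sqrt_nonneg |x n|, Real.sqrt_nonneg ‖x‖]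
    calc |UniformOnFun.toFun 𝔖 h x n - Tc cstar x n|
        ≤ |UniformOnFun.toFun 𝔖 h x n - Tc c x n| + |Tc c x n - Tc cstar x n| :=
          abs_sub_le _ _ _
      _ ≤ ε + ε * (Real.sqrt ‖x‖ + 1) := by
          rw [abs_sub_comm (Tc c x n)]
          exact add_le_add h3 h4
      _ = ε * (Real.sqrt ‖x‖ + 2) := by ring
  -- conclude equality
  have hK : (0:ℝ) < Real.sqrt ‖x‖ + 2 := by positivity
  by_contra hne
  have hd : 0 < |UniformOnFun.toFun 𝔖 h x n - Tc cstar x n| :=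
    abs_pos.2 (sub_ne_zero.2 (fun hEq => hne hEq.symm))
  set D := |UniformOnFun.toFun 𝔖 h x n - Tc cstar x n| with hD
  have hkey := key (D / (2 * (Real.sqrt ‖x‖ + 2))) (by positivity)
  have heq2 : D / (2 * (Real.sqrt ‖x‖ + 2)) * (Real.sqrt ‖x‖ + 2) = D / 2 := by
    field_simp
  rw [heq2] at hkey
  linarith


end

/-- The set `K(c₀)` of continuous vector fields on `c₀` for which `u' = f(u)`
has no local solution is `𝔠`-spaceable in `C(c₀)` (the continuous vector
fields on `c₀` with the topology of uniform convergence on bounded sets):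
`K(c₀) ∪ {0}` contains a closed subspace of dimension continuum. Closedness is
stated in the subspace of continuous fields of `c₀ →ᵤ[bounded sets] c₀`. -/
theorem stmt8 :
    ∃ S : Submodule ℝ (ZeroAtInftyContinuousMap ℕ ℝ → ZeroAtInftyContinuousMap ℕ ℝ),
      Module.rank ℝ S = Cardinal.continuum ∧
      (∀ f ∈ S, Continuous f) ∧
      (∀ f ∈ S, f ≠ 0 →
        ¬ ∃ (a b : ℝ) (_ : a < b) (u : ℝ → ZeroAtInftyContinuousMap ℕ ℝ),
          ∀ t ∈ Set.Ioo a b, HasDerivAt u (f (u t)) t) ∧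
      IsClosed {h : {h₀ : UniformOnFun (ZeroAtInftyContinuousMap ℕ ℝ)
            (ZeroAtInftyContinuousMap ℕ ℝ)
            {B : Set (ZeroAtInftyContinuousMap ℕ ℝ) | Bornology.IsBounded B} //
            Continuous (UniformOnFun.toFun _ h₀)} |
          UniformOnFun.toFun _ h.val ∈ S} := by

  classical
  refine ⟨LinearMap.range T, ?_, ?_, ?_, ?_⟩
  · rw [rank_range_of_injective T T_injective]
    exact rank_c0
  · rintro f ⟨c, rfl⟩
    exact Tc_cont c
  · rintro f ⟨c, rfl⟩ hne ⟨a, b, hab, u, hu⟩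
    have hc0 : c ≠ 0 := by
      rintro rfl
      exact hne (map_zero T)
    have hk : ∃ k, c k ≠ 0 := by
      by_contra hcontra
      push_neg at hcontra
      exact hc0 (by ext k; simpa using hcontra k)
    obtain ⟨k, hk⟩ := hk
    rcases hk.lt_or_gt with hneg | hpos
    · refine no_solution (c := -c) (k := k) ?_ hab (u := fun t => -(u t)) ?_
      · simp only [ZeroAtInftyContinuousMap.coe_neg, Pi.neg_apply]
        linarith
      · intro t ht
        have h2 := (hu t ht).neg
        rw [show -(T c (u t)) = Tc (-c) (-(u t)) from (Tc_neg_neg c (u t)).symm] at h2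
        exact h2
    · exact no_solution hpos hab hu
  · have hC : IsClosed {h₀ : UniformOnFun c0 c0 𝔖 |
        UniformOnFun.toFun 𝔖 h₀ ∈ LinearMap.range T} := by
      have hEq : {h₀ : UniformOnFun c0 c0 𝔖 | UniformOnFun.toFun 𝔖 h₀ ∈ LinearMap.range T}
          = {h₀ : UniformOnFun c0 c0 𝔖 | ∃ c, Tc c = UniformOnFun.toFun 𝔖 h₀} := by
        ext h₀
        simp only [mem_setOf_eq, LinearMap.mem_range]
        rfl
      rw [hEq]
      exact closedC
    exact hC.preimage continuous_subtype_val
end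

section
/- Any nonzero limit h in C(c₀) of a sequence L(x_k) with x_k ∈ ℓ₁, where L is the spreading operator built from Dieudonné's field f(x)_n = √|x_n| + 1/(n+1), belongs to K(c₀): the equation u' = h(u) has no local solution in c₀. -/
open Filter Topology

lemma dieudonne_key_s9 {α e t₀ t₁ : ℝ} (hα : 0 < α) (he : 0 < e) (ht : t₀ < t₁)
    {w : ℝ → ℝ} (hw : ∀ t ∈ Set.Icc t₀ t₁, HasDerivAt w (α * (Real.sqrt |w t| + e)) t)
    (h0 : |w t₀| ≤ (α * (t₁ - t₀) / 8) ^ 2) :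
    (α * (t₁ - t₀) / 4) ^ 2 ≤ w t₁ := by
  set tm : ℝ := (t₀ + t₁) / 2 with htm
  have htm0 : t₀ < tm := by simp only [htm]; linarith
  have htm1 : tm < t₁ := by simp only [htm]; linarith
  have hsub : Set.Icc t₀ tm ⊆ Set.Icc t₀ t₁ := Set.Icc_subset_Icc le_rfl htm1.le
  have hsub' : Set.Icc tm t₁ ⊆ Set.Icc t₀ t₁ := Set.Icc_subset_Icc htm0.le le_rfl
  have hcont : ContinuousOn w (Set.Icc t₀ t₁) := fun t ht' =>
    (hw t ht').continuousAt.continuousWithinAt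
  have hmono : StrictMonoOn w (Set.Icc t₀ t₁) := by
    apply strictMonoOn_of_deriv_pos (convex_Icc _ _) hcont
    intro s hs
    rw [interior_Icc] at hs
    rw [(hw s (Set.Ioo_subset_Icc_self hs)).deriv]
    positivity
  -- Step 1 : w tm ≥ 0
  have hwtm : 0 ≤ w tm := by
    by_contra hneg
    push_neg at hneg
    have hneg' : ∀ t ∈ Set.Icc t₀ tm, w t < 0 := by
      intro t ht'
      calc w t ≤ w tm := hmono.monotoneOn (hsub ht') (hsub' (Set.left_mem_Icc.2 htm1.le)) ht'.2
        _ < 0 := hneg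
    set φ : ℝ → ℝ := fun t => Real.sqrt (-(w t)) with hφ
    have hφd : ∀ t ∈ Set.Icc t₀ tm,
        HasDerivAt φ (-(α * (Real.sqrt |w t| + e)) / (2 * Real.sqrt (-(w t)))) t := by
      intro t ht'
      exact ((hw t (hsub ht')).neg).sqrt (by simp [(hneg' t ht').ne])
    have hgd : ∀ t ∈ Set.Icc t₀ tm,
        HasDerivAt (fun s => φ s + (α / 2) * s)
          (-(α * (Real.sqrt |w t| + e)) / (2 * Real.sqrt (-(w t))) + α / 2 * 1) t := by
      intro t ht'
      exact (hφd t ht').add ((hasDerivAt_id t).const_mul (α / 2))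
    have hanti : AntitoneOn (fun s => φ s + (α / 2) * s) (Set.Icc t₀ tm) := by
      apply antitoneOn_of_deriv_nonpos (convex_Icc _ _)
      · exact ((Real.continuous_sqrt.comp_continuousOn ((hcont.mono hsub).neg)).add
          (continuous_const.mul continuous_id).continuousOn)
      · intro s hs
        rw [interior_Icc] at hs
        exact (hgd s (Set.Ioo_subset_Icc_self hs)).differentiableAt.differentiableWithinAt
      · intro s hs
        rw [interior_Icc] at hs
        have hs' := Set.Ioo_subset_Icc_self hs
        rw [(hgd s hs').deriv]
        have hwneg := hneg' s hs'
        have habs : |w s| = -(w s) := abs_of_neg hwneg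
        rw [habs]
        have hsq : 0 < Real.sqrt (-(w s)) := Real.sqrt_pos.2 (by linarith)
        set q := Real.sqrt (-(w s))
        rw [div_add' _ _ _ (by positivity)]
        apply div_nonpos_of_nonpos_of_nonneg _ (by positivity)
        nlinarith [mul_pos hα he]
    have hkey := hanti (Set.left_mem_Icc.2 htm0.le) (Set.right_mem_Icc.2 htm0.le) htm0.le
    have hφ0 : φ t₀ ≤ α * (t₁ - t₀) / 8 := by
      have h1 : -(w t₀) ≤ (α * (t₁ - t₀) / 8) ^ 2 := (neg_le_abs _).trans h0
      calc φ t₀ ≤ Real.sqrt ((α * (t₁ - t₀) / 8) ^ 2) := Real.sqrt_le_sqrt h1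
        _ = α * (t₁ - t₀) / 8 := Real.sqrt_sq (by nlinarith)
    have hφm : 0 ≤ φ tm := Real.sqrt_nonneg _
    have : tm - t₀ = (t₁ - t₀) / 2 := by simp only [htm]; ring
    simp only at hkey
    nlinarith
  -- Step 2 : growth on [tm, t₁]
  set ψ : ℝ → ℝ := fun t => Real.sqrt (w t) with hψ
  have hpos : ∀ t ∈ Set.Ioo tm t₁, 0 < w t := fun t ht' =>
    lt_of_le_of_lt hwtm (hmono (hsub' (Set.left_mem_Icc.2 htm1.le)) (hsub' ⟨ht'.1.le, ht'.2.le⟩) ht'.1)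
  have hψd : ∀ t ∈ Set.Ioo tm t₁,
      HasDerivAt ψ ((α * (Real.sqrt |w t| + e)) / (2 * Real.sqrt (w t))) t := by
    intro t ht'
    exact (hw t (hsub' ⟨ht'.1.le, ht'.2.le⟩)).sqrt (hpos t ht').ne'
  have hg2d : ∀ t ∈ Set.Ioo tm t₁,
      HasDerivAt (fun s => ψ s - (α / 2) * s)
        ((α * (Real.sqrt |w t| + e)) / (2 * Real.sqrt (w t)) - α / 2 * 1) t := by
    intro t ht'
    exact (hψd t ht').sub ((hasDerivAt_id t).const_mul (α / 2))
  have hmono2 : MonotoneOn (fun s => ψ s - (α / 2) * s) (Set.Icc tm t₁) := by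
    apply monotoneOn_of_deriv_nonneg (convex_Icc _ _)
    · exact ((Real.continuous_sqrt.comp_continuousOn (hcont.mono hsub')).sub
        (continuous_const.mul continuous_id).continuousOn)
    · intro s hs
      rw [interior_Icc] at hs
      exact (hg2d s hs).differentiableAt.differentiableWithinAt
    · intro s hs
      rw [interior_Icc] at hs
      rw [(hg2d s hs).deriv]
      have hwpos := hpos s hs
      have habs : |w s| = w s := abs_of_pos hwpos
      rw [habs]
      have hsq : 0 < Real.sqrt (w s) := Real.sqrt_pos.2 hwpos
      set q := Real.sqrt (w s)
      rw [sub_nonneg, mul_one]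
      rw [le_div_iff₀ (by positivity)]
      nlinarith [mul_pos hα he]
  have hkey2 := hmono2 (Set.left_mem_Icc.2 htm1.le) (Set.right_mem_Icc.2 htm1.le) htm1.le
  simp only at hkey2
  have hψm : 0 ≤ ψ tm := Real.sqrt_nonneg _
  have hψ1 : α * (t₁ - t₀) / 4 ≤ ψ t₁ := by
    have : t₁ - tm = (t₁ - t₀) / 2 := by simp only [htm]; ring
    nlinarith
  have hw1 : 0 ≤ w t₁ :=
    hwtm.trans (hmono.monotoneOn (hsub' (Set.left_mem_Icc.2 htm1.le))
      (Set.right_mem_Icc.2 ht.le) htm1.le)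
  calc (α * (t₁ - t₀) / 4) ^ 2 ≤ (ψ t₁) ^ 2 := by
        apply pow_le_pow_left₀ (by nlinarith) hψ1
    _ = w t₁ := Real.sq_sqrt hw1

noncomputable def dieudonne_ev (n : ℕ) : ZeroAtInftyContinuousMap ℕ ℝ →L[ℝ] ℝ :=
  LinearMap.mkContinuous
    { toFun := fun f => f n
      map_add' := fun f g => rfl
      map_smul' := fun c f => rfl } 1
    (fun f => by
      rw [one_mul, ← ZeroAtInftyContinuousMap.norm_toBCF_eq_norm]
      exact f.toBCF.norm_coe_le_norm n)

@[simp] lemma dieudonne_ev_apply (n : ℕ) (f : ZeroAtInftyContinuousMap ℕ ℝ) :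
    dieudonne_ev n f = f n := rfl


/-- Any nonzero limit `h`, uniformly on bounded subsets of `c₀`, of a sequence
`L(x_k)` with `x_k ∈ ℓ₁` (where `L` is the spreading operator built from
Dieudonné's field) belongs to `K(c₀)`: `u' = h(u)` has no local solution. -/
theorem stmt9 (N : ℕ → Set ℕ) (hinf : ∀ i, (N i).Infinite)
    (hdisj : Pairwise (Function.onFun Disjoint N)) (hcov : (⋃ i, N i) = Set.univ)
    (g : ℕ → ZeroAtInftyContinuousMap ℕ ℝ → ZeroAtInftyContinuousMap ℕ ℝ)
    (hg : ∀ (i : ℕ) (x : ZeroAtInftyContinuousMap ℕ ℝ) (n : ℕ),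
      g i x n = Set.indicator (N i) (fun m => Real.sqrt |x m| + 1 / ((m : ℝ) + 1)) n)
    (x : ℕ → lp (fun _ : ℕ => ℝ) 1)
    (h : ZeroAtInftyContinuousMap ℕ ℝ → ZeroAtInftyContinuousMap ℕ ℝ) (hh : h ≠ 0)
    (hconv : ∀ B : Set (ZeroAtInftyContinuousMap ℕ ℝ), Bornology.IsBounded B →
      TendstoUniformlyOn (fun k y => ∑' i, x k i • g i y) h atTop B) :
    ¬ ∃ (a b : ℝ) (_ : a < b) (u : ℝ → ZeroAtInftyContinuousMap ℕ ℝ),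
      ∀ t ∈ Set.Ioo a b, HasDerivAt u (h (u t)) t := by
  classical
  -- the index function
  have hmem : ∀ n : ℕ, ∃ i, n ∈ N i := fun n => Set.mem_iUnion.mp (hcov ▸ Set.mem_univ n)
  set idx : ℕ → ℕ := fun n => (hmem n).choose with hidx
  have hidxmem : ∀ n, n ∈ N (idx n) := fun n => (hmem n).choose_spec
  have huniq : ∀ n i, n ∈ N i → idx n = i := by
    intro n i hi
    by_contra hne
    exact Set.disjoint_left.mp (hdisj hne) (hidxmem n) hi
  -- norm bound on g i y
  have hgbound : ∀ (i : ℕ) (y : ZeroAtInftyContinuousMap ℕ ℝ),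
      ‖g i y‖ ≤ Real.sqrt ‖y‖ + 1 := by
    intro i y
    rw [← ZeroAtInftyContinuousMap.norm_toBCF_eq_norm]
    apply BoundedContinuousFunction.norm_le (by positivity) |>.mpr
    intro m
    show ‖g i y m‖ ≤ _
    rw [hg, Real.norm_eq_abs]
    by_cases hm : m ∈ N i
    · rw [Set.indicator_of_mem hm]
      have h1 : |y m| ≤ ‖y‖ := by
        rw [← ZeroAtInftyContinuousMap.norm_toBCF_eq_norm]
        exact y.toBCF.norm_coe_le_norm m
      have h2 : Real.sqrt |y m| ≤ Real.sqrt ‖y‖ := Real.sqrt_le_sqrt h1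
      have h3 : (0:ℝ) < (m:ℝ) + 1 := by positivity
      have h4 : 1 / ((m:ℝ) + 1) ≤ 1 := by
        rw [div_le_one h3]; linarith [Nat.cast_nonneg (α := ℝ) m]
      have h5 : 0 ≤ Real.sqrt |y m| + 1 / ((m:ℝ)+1) := by positivity
      rw [abs_of_nonneg h5]
      linarith
    · rw [Set.indicator_of_notMem hm]
      simp
      positivity
  -- summability
  have hsummable : ∀ (k : ℕ) (y : ZeroAtInftyContinuousMap ℕ ℝ),
      Summable (fun i => x k i • g i y) := by
    intro k y
    apply Summable.of_norm_bounded (g := fun i => ‖x k i‖ * (Real.sqrt ‖y‖ + 1))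
    · have hs : Summable (fun i => ‖x k i‖) := by
        have := (lp.memℓp (x k)).summable (p := 1) (by norm_num)
        simpa using this
      exact hs.mul_right _
    · intro i
      exact (norm_smul_le _ _).trans
        (mul_le_mul_of_nonneg_left (hgbound i y) (norm_nonneg _))
  -- coordinate formula for the partial fields
  have hcoord : ∀ (k : ℕ) (y : ZeroAtInftyContinuousMap ℕ ℝ) (n : ℕ),
      (∑' i, x k i • g i y) n = x k (idx n) * (Real.sqrt |y n| + 1 / ((n : ℝ) + 1)) := by
    intro k y n
    have h1 : dieudonne_ev n (∑' i, x k i • g i y) = ∑' i, dieudonne_ev n (x k i • g i y) :=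
      (dieudonne_ev n).map_tsum (hsummable k y)
    have h2 : ∀ i, dieudonne_ev n (x k i • g i y) =
        x k i * (Set.indicator (N i) (fun m => Real.sqrt |y m| + 1 / ((m : ℝ) + 1)) n) := by
      intro i
      simp [smul_eq_mul, hg]
    have h3 : (∑' i, dieudonne_ev n (x k i • g i y)) =
        x k (idx n) * (Real.sqrt |y n| + 1 / ((n : ℝ) + 1)) := by
      rw [tsum_eq_single (idx n)]
      · rw [h2, Set.indicator_of_mem (hidxmem n)]
      · intro i hi
        rw [h2]
        have : n ∉ N i := fun hn => hi (huniq n i hn).symm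
        rw [Set.indicator_of_notMem this, mul_zero]
    exact h1.trans h3
  -- pointwise convergence of coordinates
  have hpt : ∀ (y : ZeroAtInftyContinuousMap ℕ ℝ) (n : ℕ),
      Tendsto (fun k => x k (idx n) * (Real.sqrt |y n| + 1 / ((n : ℝ) + 1)))
        atTop (𝓝 (h y n)) := by
    intro y n
    have h1 := hconv {y} Bornology.isBounded_singleton
    rw [tendstoUniformlyOn_singleton_iff_tendsto] at h1
    have h2 : Tendsto (fun k => dieudonne_ev n ((fun k y => ∑' i, x k i • g i y) k y))
        atTop (𝓝 (dieudonne_ev n (h y))) := ((dieudonne_ev n).continuous.tendsto _).comp h1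
    simp only [dieudonne_ev_apply, hcoord] at h2
    exact h2
  -- limit of coefficients
  set a : ℕ → ℝ := fun n => ((n : ℝ) + 1) * h 0 n with ha
  have hxa : ∀ n, Tendsto (fun k => x k (idx n)) atTop (𝓝 (a n)) := by
    intro n
    have hn1 : ((n : ℝ) + 1) ≠ 0 := by positivity
    have h1 := (hpt 0 n).const_mul ((n : ℝ) + 1)
    have h2 : (fun k => ((n:ℝ)+1) * (x k (idx n) * (Real.sqrt |(0 : ZeroAtInftyContinuousMap ℕ ℝ) n| + 1 / ((n : ℝ) + 1))))
        = fun k => x k (idx n) := by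
      funext k
      have : ((0 : ZeroAtInftyContinuousMap ℕ ℝ) n) = 0 := rfl
      rw [this]
      simp only [abs_zero, Real.sqrt_zero, zero_add]
      field_simp
    rw [h2] at h1
    exact h1
  -- formula for h
  have hform : ∀ (y : ZeroAtInftyContinuousMap ℕ ℝ) (n : ℕ),
      h y n = a n * (Real.sqrt |y n| + 1 / ((n : ℝ) + 1)) :=
    fun y n => tendsto_nhds_unique (hpt y n) ((hxa n).mul_const _)
  -- a nonzero coefficient
  obtain ⟨y₀, hy₀⟩ : ∃ y, h y ≠ 0 := by
    by_contra hc
    push_neg at hc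
    exact hh (funext hc)
  obtain ⟨n₀, hn₀⟩ : ∃ n, h y₀ n ≠ 0 := by
    by_contra hc
    push_neg at hc
    exact hy₀ (DFunLike.ext _ _ hc)
  have hα0 : a n₀ ≠ 0 := by
    intro hz
    rw [hform, hz, zero_mul] at hn₀
    exact hn₀ rfl
  -- a is constant on N (idx n₀)
  have hconst : ∀ m, m ∈ N (idx n₀) → a m = a n₀ := by
    intro m hm
    have him : idx m = idx n₀ := huniq m _ hm
    have h1 : Tendsto (fun k => x k (idx n₀)) atTop (𝓝 (a m)) := him ▸ hxa m
    exact tendsto_nhds_unique h1 (hxa n₀)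
  -- main argument
  rintro ⟨ta, tb, htab, u, hu⟩
  -- coordinates of the solution
  have hucoord : ∀ (n : ℕ) (t : ℝ), t ∈ Set.Ioo ta tb →
      HasDerivAt (fun s => u s n) (h (u t) n) t := by
    intro n t ht
    have := (dieudonne_ev n).hasFDerivAt.comp_hasDerivAt t (hu t ht)
    simpa [Function.comp_def] using this
  set t₀ : ℝ := ta + (tb - ta) / 3 with ht₀
  set t₁ : ℝ := tb - (tb - ta) / 3 with ht₁
  have h01 : t₀ < t₁ := by simp only [ht₀, ht₁]; linarith
  have hIccsub : Set.Icc t₀ t₁ ⊆ Set.Ioo ta tb := by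
    intro t ht
    constructor
    · have := ht.1; simp only [ht₀] at this ⊢; linarith
    · have := ht.2; simp only [ht₁] at this ⊢; linarith
  set A : ℝ := |a n₀| with hA
  have hApos : 0 < A := abs_pos.mpr hα0
  set ε₀ : ℝ := (A * (t₁ - t₀) / 8) ^ 2 with hε₀
  set c : ℝ := (A * (t₁ - t₀) / 4) ^ 2 with hc
  have hε₀pos : 0 < ε₀ := by
    have : 0 < t₁ - t₀ := by linarith
    positivity
  have hcpos : 0 < c := by
    have : 0 < t₁ - t₀ := by linarith
    positivity
  -- cofinite smallness at t₀ and t₁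
  have hzero : ∀ t : ℝ, ∀ ε : ℝ, 0 < ε → ∀ᶠ n in cofinite, |u t n| < ε := by
    intro t ε hε
    have h1 : Tendsto (u t) (cocompact ℕ) (𝓝 0) := zero_at_infty (u t)
    rw [cocompact_eq_cofinite] at h1
    have h2 := Metric.tendsto_nhds.mp h1 ε hε
    simpa [Real.dist_eq] using h2
  have hev : ∀ᶠ n in cofinite, |u t₀ n| < ε₀ ∧ |u t₁ n| < c :=
    (hzero t₀ ε₀ hε₀pos).and (hzero t₁ c hcpos)
  -- pick a good coordinate n in N (idx n₀)
  obtain ⟨n, hnN, hn₀small, hn₁small⟩ :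
      ∃ n ∈ N (idx n₀), |u t₀ n| < ε₀ ∧ |u t₁ n| < c := by
    have hfin : {n | ¬(|u t₀ n| < ε₀ ∧ |u t₁ n| < c)}.Finite := hev
    obtain ⟨n, hn1, hn2⟩ := ((hinf (idx n₀)).diff hfin).nonempty
    exact ⟨n, hn1, not_not.mp hn2⟩
  -- the scalar ODE for coordinate n
  have he : (0:ℝ) < 1 / ((n : ℝ) + 1) := by positivity
  have hw : ∀ t ∈ Set.Icc t₀ t₁,
      HasDerivAt (fun s => u s n) (a n₀ * (Real.sqrt |u t n| + 1 / ((n : ℝ) + 1))) t := by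
    intro t ht
    have h1 := hucoord n t (hIccsub ht)
    rwa [hform (u t) n, hconst n hnN] at h1
  rcases lt_trichotomy (a n₀) 0 with hneg | hzero' | hpos
  · -- negative coefficient : apply key lemma to -w
    have hA' : A = -(a n₀) := abs_of_neg hneg
    have hw' : ∀ t ∈ Set.Icc t₀ t₁,
        HasDerivAt (fun s => -(u s n)) (A * (Real.sqrt |(-(u t n))| + 1 / ((n : ℝ) + 1))) t := by
      intro t ht
      have := (hw t ht).neg
      rw [hA']
      simpa [abs_neg, neg_mul, Pi.neg_def] using this
    have h0 : |(-(u t₀ n))| ≤ (A * (t₁ - t₀) / 8) ^ 2 := by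
      rw [abs_neg]; exact hn₀small.le
    have := dieudonne_key_s9 hApos he h01 hw' h0
    have h2 : -(u t₁ n) ≤ |u t₁ n| := neg_le_abs _
    rw [← hc] at this
    linarith
  · exact hα0 hzero'
  · -- positive coefficient : apply key lemma to w directly
    have hA' : A = a n₀ := abs_of_pos hpos
    rw [hA'] at hApos
    have h0 : |u t₀ n| ≤ (a n₀ * (t₁ - t₀) / 8) ^ 2 := by
      rw [← hA']; exact hn₀small.le
    have := dieudonne_key_s9 hApos he h01 hw h0
    have h2 : u t₁ n ≤ |u t₁ n| := le_abs_self _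
    rw [← hA', ← hc] at this
    linarith
end

section
/- Let X be an infinite-dimensional Banach space and 0 < p < ∞. Then ℓ_p(X) \ ⋃_{0<q<p} ℓ_q(X) together with 0 contains a closed subspace of ℓ_p(X) whose dimension equals dim ℓ_p(X) = dim X; i.e., the set is maximal-spaceable. -/
open Filter Topology

noncomputable def bSeq (n : ℕ) : ℝ := 1 / ((n + 2) * (Real.log (n + 2)) ^ 2)

lemma bSeq_pos (n : ℕ) : 0 < bSeq n := by
  have h0 : (0:ℝ) ≤ n := Nat.cast_nonneg n
  have h1 : (1:ℝ) < (n:ℝ) + 2 := by linarith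
  have hlog := Real.log_pos h1
  unfold bSeq
  positivity

lemma bSeq_antitone : ∀ ⦃m n : ℕ⦄, 0 < m → m ≤ n → bSeq n ≤ bSeq m := by
  intro m n _ hmn
  have h0 : (0:ℝ) ≤ m := Nat.cast_nonneg m
  have hc : (m:ℝ) + 2 ≤ (n:ℝ) + 2 := by
    have : (m:ℝ) ≤ n := Nat.cast_le.mpr hmn
    linarith
  have h1m : (1:ℝ) < (m:ℝ) + 2 := by linarith
  have hlm := Real.log_pos h1m
  have hlogle : Real.log ((m:ℝ) + 2) ≤ Real.log ((n:ℝ) + 2) :=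
    Real.log_le_log (by linarith) hc
  have hsq : (Real.log ((m:ℝ) + 2)) ^ 2 ≤ (Real.log ((n:ℝ) + 2)) ^ 2 :=
    pow_le_pow_left₀ hlm.le hlogle 2
  have hden : ((m:ℝ) + 2) * (Real.log ((m:ℝ) + 2)) ^ 2
      ≤ ((n:ℝ) + 2) * (Real.log ((n:ℝ) + 2)) ^ 2 :=
    mul_le_mul hc hsq (by positivity) (by linarith)
  unfold bSeq
  exact one_div_le_one_div_of_le (by positivity) hden

lemma bSeq_summable : Summable bSeq := by
  rw [← summable_condensed_iff_of_nonneg (fun n => (bSeq_pos n).le) bSeq_antitone]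
  rw [← summable_nat_add_iff 1]
  have hcomp : Summable fun k : ℕ => ((Real.log 2) ^ 2 * ((k:ℝ) + 1) ^ 2)⁻¹ := by
    have h1 : Summable fun k : ℕ => 1 / ((k:ℝ) + 1) ^ 2 := by
      have := (summable_nat_add_iff 1).mpr (Real.summable_one_div_nat_pow.mpr one_lt_two)
      refine this.congr fun k => ?_
      push_cast
      ring
    refine ((h1.mul_left ((Real.log 2) ^ 2)⁻¹).congr fun k => ?_)
    rw [mul_inv, div_eq_mul_inv, one_mul]
  refine Summable.of_nonneg_of_le (fun k => ?_) (fun k => ?_) hcomp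
  · have := bSeq_pos (2 ^ (k + 1))
    positivity
  · have hl2 : (0:ℝ) < Real.log 2 := Real.log_pos one_lt_two
    set A : ℝ := (2:ℝ) ^ (k + 1) with hA
    have hApos : (0:ℝ) < A := by positivity
    have hcast : ((2 ^ (k + 1) : ℕ) : ℝ) = A := by push_cast; ring
    have hbs : bSeq (2 ^ (k + 1)) = 1 / ((A + 2) * (Real.log (A + 2)) ^ 2) := by
      unfold bSeq; rw [hcast]
    have hlogA : ((k:ℝ) + 1) * Real.log 2 ≤ Real.log (A + 2) := by
      have h1 : Real.log A = ((k:ℝ) + 1) * Real.log 2 := by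
        rw [hA, Real.log_pow]; push_cast; ring
      rw [← h1]
      exact Real.log_le_log hApos (by linarith)
    have hlogApos : (0:ℝ) < Real.log (A + 2) := lt_of_lt_of_le (by positivity) hlogA
    have hsq : (((k:ℝ) + 1) * Real.log 2) ^ 2 ≤ (Real.log (A + 2)) ^ 2 :=
      pow_le_pow_left₀ (by positivity) hlogA 2
    rw [hbs, mul_one_div, ← one_div, div_le_div_iff₀ (by positivity) (by positivity), one_mul]
    calc A * ((Real.log 2) ^ 2 * ((k:ℝ) + 1) ^ 2)
        = A * (((k:ℝ) + 1) * Real.log 2) ^ 2 := by ring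
      _ ≤ (A + 2) * (Real.log (A + 2)) ^ 2 :=
          mul_le_mul (by linarith) hsq (by positivity) (by linarith)

lemma bSeq_def (n : ℕ) : bSeq n = 1 / (((n:ℝ) + 2) * (Real.log ((n:ℝ) + 2)) ^ 2) := rfl

lemma bSeq_rpow_not_summable {r : ℝ} (hr0 : 0 < r) (hr1 : r < 1) :
    ¬ Summable (fun n => bSeq n ^ r) := by
  intro h
  set ε : ℝ := (1 - r) / (2 * r) with hε
  have hεpos : 0 < ε := div_pos (by linarith) (by linarith)
  have hlit := (isLittleO_log_rpow_atTop hεpos).bound one_pos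
  have htd : Tendsto (fun n : ℕ => (n:ℝ) + 2) atTop atTop :=
    tendsto_atTop_add_const_right _ 2 tendsto_natCast_atTop_atTop
  obtain ⟨N, hN⟩ := eventually_atTop.mp (htd.eventually hlit)
  have key : ∀ n : ℕ, N ≤ n → 1 / ((n:ℝ) + 2) ≤ bSeq n ^ r := by
    intro n hn
    set x : ℝ := (n:ℝ) + 2 with hx
    have hx2 : (2:ℝ) ≤ x := by
      have : (0:ℝ) ≤ n := Nat.cast_nonneg n
      linarith
    have hxpos : (0:ℝ) < x := by linarith
    have hlx : 0 < Real.log x := Real.log_pos (by linarith)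
    have hxε : 0 < x ^ ε := Real.rpow_pos_of_pos hxpos ε
    have hb := hN n hn
    rw [one_mul, Real.norm_eq_abs, Real.norm_eq_abs, abs_of_pos hlx, abs_of_pos hxε] at hb
    -- x * (log x)^2 ≤ x ^ (1/r)
    have hsq : (Real.log x) ^ 2 ≤ (x ^ ε) ^ 2 := pow_le_pow_left₀ hlx.le hb 2
    have hpow : x * (x ^ ε) ^ 2 = x ^ (1 / r) := by
      have h1 : x * (x ^ ε) ^ 2 = x ^ (1 + ε + ε) := by
        rw [Real.rpow_add hxpos, Real.rpow_add hxpos, Real.rpow_one]; ring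
      rw [h1]
      congr 1
      rw [hε]
      field_simp
      ring
    have hle : x * (Real.log x) ^ 2 ≤ x ^ (1 / r) := by
      rw [← hpow]
      exact mul_le_mul_of_nonneg_left hsq hxpos.le
    have hrle : (x * (Real.log x) ^ 2) ^ r ≤ x := by
      calc (x * (Real.log x) ^ 2) ^ r ≤ (x ^ (1 / r)) ^ r :=
            Real.rpow_le_rpow (by positivity) hle hr0.le
        _ = x := by
            rw [← Real.rpow_mul hxpos.le, one_div_mul_cancel hr0.ne', Real.rpow_one]
    have : bSeq n ^ r = 1 / (x * (Real.log x) ^ 2) ^ r := by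
      rw [bSeq_def n, ← hx, Real.div_rpow (by norm_num) (by positivity), Real.one_rpow]
    rw [this]
    exact one_div_le_one_div_of_le (Real.rpow_pos_of_pos (by positivity) r) hrle
  have h' : Summable fun n : ℕ => bSeq (n + N) ^ r := ((summable_nat_add_iff N).mpr h)
  have h2 : Summable fun n : ℕ => 1 / ((n:ℝ) + (N + 2 : ℕ)) := by
    refine Summable.of_nonneg_of_le (fun n => by positivity) (fun n => ?_) h'
    have := key (n + N) (Nat.le_add_left N n)
    have hc : ((n + N : ℕ) : ℝ) + 2 = (n:ℝ) + (N + 2 : ℕ) := by push_cast; ring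
    rwa [hc] at this
  have h3 : Summable fun n : ℕ => 1 / ((n:ℝ)) := by
    rw [← summable_nat_add_iff (N + 2)]
    refine h2.congr fun n => ?_
    push_cast
    ring_nf
  exact Real.not_summable_one_div_natCast h3

lemma aux_summable_sub {E : Type*} [NormedAddCommGroup E] {p : ℝ} (hp : 0 < p)
    {f g : ℕ → E} (hf : Summable fun n => ‖f n‖ ^ p) (hg : Summable fun n => ‖g n‖ ^ p) :
    Summable fun n => ‖f n - g n‖ ^ p := by
  refine Summable.of_nonneg_of_le (fun n => Real.rpow_nonneg (norm_nonneg _) p)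
    (fun n => ?_) (((hf.add hg).mul_left ((2:ℝ) ^ p)))
  have h1 : ‖f n - g n‖ ≤ ‖f n‖ + ‖g n‖ := norm_sub_le _ _
  have h2 : ‖f n - g n‖ ^ p ≤ (‖f n‖ + ‖g n‖) ^ p :=
    Real.rpow_le_rpow (norm_nonneg _) h1 hp.le
  refine h2.trans ?_
  have hfp : 0 ≤ ‖f n‖ ^ p := Real.rpow_nonneg (norm_nonneg _) p
  have hgp : 0 ≤ ‖g n‖ ^ p := Real.rpow_nonneg (norm_nonneg _) p
  have h2p : (0:ℝ) ≤ (2:ℝ) ^ p := Real.rpow_nonneg (by norm_num) p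
  rcases le_total ‖f n‖ ‖g n‖ with hc | hc
  · calc (‖f n‖ + ‖g n‖) ^ p ≤ (2 * ‖g n‖) ^ p :=
          Real.rpow_le_rpow (by positivity) (by linarith) hp.le
      _ = 2 ^ p * ‖g n‖ ^ p := Real.mul_rpow (by norm_num) (norm_nonneg _)
      _ ≤ 2 ^ p * (‖f n‖ ^ p + ‖g n‖ ^ p) := by nlinarith
  · calc (‖f n‖ + ‖g n‖) ^ p ≤ (2 * ‖f n‖) ^ p :=
          Real.rpow_le_rpow (by positivity) (by linarith) hp.le
      _ = 2 ^ p * ‖f n‖ ^ p := Real.mul_rpow (by norm_num) (norm_nonneg _)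
      _ ≤ 2 ^ p * (‖f n‖ ^ p + ‖g n‖ ^ p) := by nlinarith

/-- For an infinite-dimensional Banach space `X` and `0 < p < ∞`, the set
`ℓ_p(X) \ ⋃_{0<q<p} ℓ_q(X)` is maximal-spaceable: together with `0` it
contains a closed (sequentially, for the `ℓ_p` metric) subspace of `ℓ_p(X)`
of dimension `dim ℓ_p(X) = dim X`. -/
theorem stmt12 (X : Type*) [NormedAddCommGroup X] [NormedSpace ℝ X]
    [CompleteSpace X] (hX : ¬ FiniteDimensional ℝ X) (p : ℝ) (hp : 0 < p) :
    ∃ S : Submodule ℝ (ℕ → X),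
      (∀ f ∈ S, Summable fun n => ‖f n‖ ^ p) ∧
      Module.rank ℝ S = Module.rank ℝ X ∧
      (∀ f ∈ S, f ≠ 0 → ∀ q : ℝ, 0 < q → q < p →
        ¬ Summable fun n => ‖f n‖ ^ q) ∧
      (∀ z : ℕ → X, (Summable fun n => ‖z n‖ ^ p) →
        (∃ F : ℕ → ℕ → X, (∀ k, F k ∈ S) ∧
          Tendsto (fun k => ∑' n, ‖F k n - z n‖ ^ p) atTop (𝓝 0)) → z ∈ S) := by
  classical
  set a : ℕ → ℝ := fun n => bSeq n ^ (1 / p) with ha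
  have hapos : ∀ n, 0 < a n := fun n => Real.rpow_pos_of_pos (bSeq_pos n) _
  -- the norm computation
  have hnorm : ∀ (x : X) (n : ℕ) (q : ℝ), 0 < q →
      ‖a n • x‖ ^ q = bSeq n ^ (q / p) * ‖x‖ ^ q := by
    intro x n q hq
    rw [norm_smul, Real.norm_eq_abs, abs_of_pos (hapos n),
      Real.mul_rpow (hapos n).le (norm_nonneg _), ha]
    congr 1
    rw [← Real.rpow_mul (bSeq_pos n).le]
    congr 1
    field_simp
  have hsum : ∀ x : X, Summable fun n => ‖a n • x‖ ^ p := by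
    intro x
    refine ((bSeq_summable.mul_right (‖x‖ ^ p)).congr fun n => ?_)
    rw [hnorm x n p hp, div_self hp.ne', Real.rpow_one]
  -- the linear map
  set T : X →ₗ[ℝ] (ℕ → X) :=
    { toFun := fun x => fun n => a n • x
      map_add' := fun x y => by funext n; simp [smul_add]
      map_smul' := fun c x => by
        funext n
        simp only [RingHom.id_apply, Pi.smul_apply]
        rw [smul_comm] } with hT
  have hTapp : ∀ (x : X) (n : ℕ), T x n = a n • x := fun x n => rfl
  have hinj : Function.Injective T := by
    intro x y hxy
    have h0 := congrFun hxy 0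
    rw [hTapp, hTapp] at h0
    exact smul_right_injective X (hapos 0).ne' h0
  refine ⟨LinearMap.range T, ?_, ?_, ?_, ?_⟩
  · rintro f ⟨x, rfl⟩
    exact hsum x
  · exact (LinearEquiv.ofInjective T hinj).rank_eq.symm
  · rintro f ⟨x, rfl⟩ hf q hq hqp hsq
    have hx : x ≠ 0 := by
      rintro rfl
      exact hf (map_zero T)
    have hxq : 0 < ‖x‖ ^ q := Real.rpow_pos_of_pos (norm_pos_iff.mpr hx) q
    have : Summable fun n => bSeq n ^ (q / p) := by
      refine ((hsq.mul_right (‖x‖ ^ q)⁻¹).congr fun n => ?_)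
      rw [hTapp, hnorm x n q hq, mul_assoc, mul_inv_cancel₀ hxq.ne', mul_one]
    exact bSeq_rpow_not_summable (div_pos hq hp) ((div_lt_one hp).mpr hqp) this
  · rintro z hz ⟨F, hF, hconv⟩
    choose xs hxs using fun k => (hF k : ∃ x, T x = F k)
    -- summability of the differences
    have hdiff : ∀ k, Summable fun n => ‖F k n - z n‖ ^ p := by
      intro k
      have hFs : Summable fun n => ‖F k n‖ ^ p := by
        rw [← hxs k]; exact hsum (xs k)
      exact aux_summable_sub hp hFs hz
    -- pointwise convergence
    have hpt : ∀ n, Tendsto (fun k => F k n) atTop (𝓝 (z n)) := by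
      intro n
      have hsq : Tendsto (fun k => ‖F k n - z n‖ ^ p) atTop (𝓝 0) := by
        refine squeeze_zero (fun k => Real.rpow_nonneg (norm_nonneg _) p)
          (fun k => ?_) hconv
        exact Summable.le_tsum (hdiff k) n fun j _ => Real.rpow_nonneg (norm_nonneg _) p
      have hroot : Tendsto (fun t : ℝ => t ^ (1 / p)) (𝓝 0) (𝓝 0) := by
        have := (Real.continuousAt_rpow_const 0 (1 / p) (Or.inr (by positivity)))
        have h0 : (0:ℝ) ^ p⁻¹ = 0 := Real.zero_rpow (by positivity)
        simpa [ContinuousAt, h0, one_div] using this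
      have := hroot.comp hsq
      have heq : (fun k => (‖F k n - z n‖ ^ p) ^ (1 / p)) = fun k => ‖F k n - z n‖ := by
        funext k
        rw [← Real.rpow_mul (norm_nonneg _), mul_one_div, div_self hp.ne', Real.rpow_one]
      rw [show (fun t : ℝ => t ^ (1/p)) ∘ (fun k => ‖F k n - z n‖ ^ p)
          = fun k => (‖F k n - z n‖ ^ p) ^ (1 / p) from rfl, heq] at this
      exact tendsto_iff_norm_sub_tendsto_zero.mpr this
    -- the candidate limit
    set x : X := (a 0)⁻¹ • z 0 with hxdef
    have hxs0 : Tendsto xs atTop (𝓝 x) := by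
      have h0 : Tendsto (fun k => a 0 • xs k) atTop (𝓝 (z 0)) := by
        have := hpt 0
        refine this.congr fun k => ?_
        rw [← hxs k, hTapp]
      have := h0.const_smul (a 0)⁻¹
      refine this.congr fun k => ?_
      rw [inv_smul_smul₀ (hapos 0).ne']
    refine ⟨x, funext fun n => ?_⟩
    have h1 : Tendsto (fun k => a n • xs k) atTop (𝓝 (a n • x)) := hxs0.const_smul (a n)
    have h2 : Tendsto (fun k => a n • xs k) atTop (𝓝 (z n)) :=
      (hpt n).congr fun k => (congrFun (hxs k) n).symm
    rw [hTapp]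
    exact (tendsto_nhds_unique h2 h1).symm
end

section
/- Let X be an infinite-dimensional Banach space. Then c₀(X) \ ⋃_{p>0} ℓ_p(X) together with 0 contains a closed subspace of c₀(X) of dimension dim c₀(X) = dim X. -/
open Filter Topology

noncomputable def aSeq : ℕ → ℝ := fun n => (Real.log (n + 2))⁻¹

lemma log_n2_pos (n : ℕ) : 0 < Real.log (n + 2) := by
  apply Real.log_pos
  have : (0:ℝ) ≤ (n:ℝ) := Nat.cast_nonneg n
  linarith

lemma aSeq_pos (n : ℕ) : 0 < aSeq n := inv_pos.2 (log_n2_pos n)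

lemma nat_add_two_tendsto : Tendsto (fun n : ℕ => (n:ℝ) + 2) atTop atTop :=
  tendsto_atTop_add_const_right _ 2 tendsto_natCast_atTop_atTop

lemma aSeq_tendsto : Tendsto aSeq atTop (𝓝 0) := by
  have h1 : Tendsto (fun n : ℕ => Real.log ((n:ℝ) + 2)) atTop atTop :=
    Real.tendsto_log_atTop.comp nat_add_two_tendsto
  exact h1.inv_tendsto_atTop

lemma aSeq_not_summable_rpow {q : ℝ} (hq : 0 < q) : ¬ Summable (fun n => aSeq n ^ q) := by
  intro hsum
  -- eventually, (log x)^q ≤ x for x = n+2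
  have hlo := isLittleO_log_rpow_atTop (show (0:ℝ) < 1/q by positivity)
  have hb : ∀ᶠ x : ℝ in atTop, ‖Real.log x‖ ≤ 1 * ‖x ^ (1/q)‖ := hlo.bound one_pos
  have hev : ∀ᶠ x : ℝ in atTop, (Real.log x) ^ q ≤ x := by
    filter_upwards [hb, eventually_ge_atTop (1:ℝ)] with x hx hx1
    have hx0 : (0:ℝ) ≤ x := by linarith
    have hlog0 : 0 ≤ Real.log x := Real.log_nonneg hx1
    have hrp0 : 0 ≤ x ^ (1/q) := Real.rpow_nonneg hx0 _
    rw [one_mul, Real.norm_eq_abs, Real.norm_eq_abs, abs_of_nonneg hlog0,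
      abs_of_nonneg hrp0] at hx
    calc (Real.log x) ^ q ≤ (x ^ (1/q)) ^ q := Real.rpow_le_rpow hlog0 hx hq.le
      _ = x ^ ((1/q) * q) := (Real.rpow_mul hx0 _ _).symm
      _ = x := by rw [one_div_mul_cancel hq.ne', Real.rpow_one]
  have hevn : ∀ᶠ n : ℕ in atTop, ((n:ℝ) + 2)⁻¹ ≤ aSeq n ^ q := by
    filter_upwards [nat_add_two_tendsto.eventually hev] with n hn
    have hl := log_n2_pos n
    have : aSeq n ^ q = ((Real.log ((n:ℝ) + 2)) ^ q)⁻¹ := by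
      unfold aSeq
      rw [← Real.inv_rpow hl.le]
    rw [this]
    exact inv_anti₀ (Real.rpow_pos_of_pos hl q) hn
  obtain ⟨N, hN⟩ := eventually_atTop.1 hevn
  have hsum2 : Summable (fun n : ℕ => aSeq (n + N) ^ q) :=
    (summable_nat_add_iff N).2 hsum
  have hsum3 : Summable (fun n : ℕ => ((n:ℝ) + N + 2)⁻¹) := by
    refine Summable.of_nonneg_of_le (fun n => by positivity) (fun n => ?_) hsum2
    have := hN (n + N) (Nat.le_add_left N n)
    push_cast at this ⊢
    convert this using 2
  have hsum4 : Summable (fun n : ℕ => ((n + (N + 2) : ℕ) : ℝ)⁻¹) := by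
    convert hsum3 using 2 with n
    push_cast
    ring
  exact Real.not_summable_natCast_inv ((summable_nat_add_iff (N + 2)).1 hsum4)

/-- For an infinite-dimensional Banach space `X`, the set
`c₀(X) \ ⋃_{p>0} ℓ_p(X)` together with `0` contains a closed (sequentially,
for the sup norm) subspace of `c₀(X)` of dimension `dim c₀(X) = dim X`. -/
theorem stmt13 (X : Type*) [NormedAddCommGroup X] [NormedSpace ℝ X]
    [CompleteSpace X] (hX : ¬ FiniteDimensional ℝ X) :
    ∃ S : Submodule ℝ (ℕ → X),
      (∀ f ∈ S, Tendsto (fun n => ‖f n‖) atTop (𝓝 0)) ∧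
      Module.rank ℝ S = Module.rank ℝ X ∧
      (∀ f ∈ S, f ≠ 0 → ∀ q : ℝ, 0 < q → ¬ Summable fun n => ‖f n‖ ^ q) ∧
      (∀ z : ℕ → X, Tendsto (fun n => ‖z n‖) atTop (𝓝 0) →
        (∃ F : ℕ → ℕ → X, (∀ k, F k ∈ S) ∧
          Tendsto (fun k => ⨆ n, ‖F k n - z n‖) atTop (𝓝 0)) → z ∈ S) := by
  classical
  set φ : X →ₗ[ℝ] (ℕ → X) :=
    { toFun := fun x => fun n => aSeq n • x
      map_add' := by intro x y; funext n; exact smul_add _ _ _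
      map_smul' := by intro c x; funext n; exact smul_comm _ _ _ }
  have hφ : Function.Injective φ := by
    intro x y hxy
    have h0 : aSeq 0 • x = aSeq 0 • y := congrFun hxy 0
    exact smul_right_injective X (aSeq_pos 0).ne' h0
  refine ⟨LinearMap.range φ, ?_, ?_, ?_, ?_⟩
  · rintro f ⟨x, rfl⟩
    have : (fun n => ‖(φ x) n‖) = fun n => aSeq n * ‖x‖ := by
      funext n
      show ‖aSeq n • x‖ = aSeq n * ‖x‖
      rw [norm_smul, Real.norm_eq_abs, abs_of_pos (aSeq_pos n)]
    rw [this]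
    simpa using aSeq_tendsto.mul_const ‖x‖
  · exact ((LinearEquiv.ofInjective φ hφ).rank_eq).symm
  · rintro f ⟨x, rfl⟩ hf q hq hsum
    have hx : x ≠ 0 := by
      intro hx0
      apply hf
      rw [hx0]
      exact map_zero φ
    have hxn : (0:ℝ) < ‖x‖ := norm_pos_iff.2 hx
    apply aSeq_not_summable_rpow hq
    have heq : (fun n => ‖(φ x) n‖ ^ q) = fun n => aSeq n ^ q * ‖x‖ ^ q := by
      funext n
      have : (φ x) n = aSeq n • x := rfl
      rw [this, norm_smul, Real.norm_eq_abs, abs_of_pos (aSeq_pos n),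
        Real.mul_rpow (aSeq_pos n).le (norm_nonneg x)]
    rw [heq] at hsum
    have := hsum.mul_right (‖x‖ ^ q)⁻¹
    simpa [mul_assoc, mul_inv_cancel₀ (Real.rpow_pos_of_pos hxn q).ne'] using this
  · rintro z hz ⟨F, hFS, hFlim⟩
    choose xk hxk using fun k => hFS k
    -- boundedness of each difference sequence
    have hFz : ∀ k, Tendsto (fun n => ‖F k n - z n‖) atTop (𝓝 0) := by
      intro k
      have h1 : Tendsto (fun n => ‖F k n‖) atTop (𝓝 0) := by
        have : (fun n => ‖F k n‖) = fun n => aSeq n * ‖xk k‖ := by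
          funext n
          rw [← hxk k]
          show ‖aSeq n • xk k‖ = aSeq n * ‖xk k‖
          rw [norm_smul, Real.norm_eq_abs, abs_of_pos (aSeq_pos n)]
        rw [this]
        simpa using aSeq_tendsto.mul_const ‖xk k‖
      have := h1.add hz
      rw [add_zero] at this
      refine squeeze_zero (fun n => norm_nonneg _) (fun n => ?_) this
      exact (norm_sub_le _ _)
    have hbdd : ∀ k, BddAbove (Set.range fun n => ‖F k n - z n‖) := fun k =>
      (hFz k).bddAbove_range
    have hle : ∀ k n, ‖F k n - z n‖ ≤ ⨆ m, ‖F k m - z m‖ := fun k n =>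
      le_ciSup (hbdd k) n
    have hcoord : ∀ n, Tendsto (fun k => F k n) atTop (𝓝 (z n)) := by
      intro n
      rw [tendsto_iff_norm_sub_tendsto_zero]
      exact squeeze_zero (fun k => norm_nonneg _) (fun k => hle k n) hFlim
    -- xk converges
    have ha0 : aSeq 0 ≠ 0 := (aSeq_pos 0).ne'
    have hxconv : Tendsto xk atTop (𝓝 ((aSeq 0)⁻¹ • z 0)) := by
      have h0 : Tendsto (fun k => (aSeq 0)⁻¹ • F k 0) atTop
          (𝓝 ((aSeq 0)⁻¹ • z 0)) := (hcoord 0).const_smul _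
      have : (fun k => (aSeq 0)⁻¹ • F k 0) = xk := by
        funext k
        rw [← hxk k]
        show (aSeq 0)⁻¹ • (aSeq 0 • xk k) = xk k
        rw [smul_smul, inv_mul_cancel₀ ha0, one_smul]
      rwa [this] at h0
    set x := (aSeq 0)⁻¹ • z 0 with hxdef
    refine ⟨x, ?_⟩
    funext n
    have h1 : Tendsto (fun k => F k n) atTop (𝓝 (aSeq n • x)) := by
      have := hxconv.const_smul (aSeq n)
      have heq : (fun k => aSeq n • xk k) = fun k => F k n := by
        funext k
        rw [← hxk k]
        rfl
      rwa [heq] at this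
    exact tendsto_nhds_unique h1 (hcoord n)
end
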